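/- arXiv:1803.00199 — 3 statements merged into one kernel-verified Lean document; each statement's English description precedes it below -/
import Mathlib

section
/- Let n ≥ 3 be odd and let E be an ellipsoid in ℝⁿ. Then E is polynomially integrable: there exist continuous functions a_0, …, a_{n-1} on S^{n-1} such that V_{n-1}(E ∩ {ξ^⊥ + tξ}) = Σ_{k=0}^{n-1} a_k(ξ) t^k for every ξ ∈ S^{n-1} and every t for which E ∩ {ξ^⊥ + tξ} is nonempty. -/
open MeasureTheory Metric Set Module Polynomial
open scoped RealInnerProductSpace

noncomputable section

/-- Euclidean space `ℝⁿ`. -/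
abbrev Euc (n : ℕ) := EuclideanSpace ℝ (Fin n)

/-- The parallel section function: `A_{K,ξ}(t) = V_{n-1}(K ∩ {ξ^⊥ + tξ})`, the
`(n-1)`-dimensional Lebesgue measure of the section of `K` by the hyperplane
`ξ^⊥ + tξ`, computed via the isometric parametrization `y ↦ tξ + y` of this
hyperplane by the subspace `ξ^⊥ = (ℝ ∙ ξ)ᗮ`. -/
def parallelSection {n : ℕ} (K : Set (Euc n)) (ξ : Euc n) (t : ℝ) : ℝ :=
  (volume {y : (ℝ ∙ ξ)ᗮ | t • ξ + (y : Euc n) ∈ K}).toReal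

/-- `K` is polynomially integrable: there are an integer `N ≥ 0` and functions
`a_0, …, a_N` on `S^{n-1}` such that `A_{K,ξ}(t) = ∑_{k=0}^N a_k(ξ) t^k` for every
`ξ ∈ S^{n-1}` and every `t` for which the section `K ∩ {ξ^⊥ + tξ}` is nonempty. -/
def PolyIntegrable {n : ℕ} (K : Set (Euc n)) : Prop :=
  ∃ (N : ℕ) (a : ℕ → (sphere (0 : Euc n) 1 → ℝ)),
    ∀ ξ : sphere (0 : Euc n) 1, ∀ t : ℝ,
      (K ∩ {x : Euc n | ⟪x, (ξ : Euc n)⟫ = t}).Nonempty →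
      parallelSection K (ξ : Euc n) t = ∑ k ∈ Finset.range (N + 1), a k ξ * t ^ k

/-- An ellipsoid in `ℝⁿ`: the image of the closed unit Euclidean ball under an
invertible affine transformation. -/
def IsEllipsoid {n : ℕ} (E : Set (Euc n)) : Prop :=
  ∃ T : Euc n ≃ᵃ[ℝ] Euc n, E = T '' closedBall (0 : Euc n) 1

lemma orthonormal_cons {m : ℕ} {ξ : Euc (m+1)} (hξ : ‖ξ‖ = 1)
    (b : OrthonormalBasis (Fin m) ℝ (ℝ ∙ ξ)ᗮ) :
    Orthonormal ℝ (Fin.cons ξ (fun i => (b i : Euc (m+1))) : Fin (m+1) → Euc (m+1)) := by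
  rw [orthonormal_iff_ite]
  have hmem : ∀ l : Fin m, ⟪ξ, ((b l : (ℝ ∙ ξ)ᗮ) : Euc (m+1))⟫ = 0 := fun l =>
    Submodule.mem_orthogonal_singleton_iff_inner_right.mp (b l).2
  intro i j
  induction i using Fin.cases with
  | zero =>
    induction j using Fin.cases with
    | zero =>
      rw [Fin.cons_zero, if_pos rfl, real_inner_self_eq_norm_sq, hξ, one_pow]
    | succ j' =>
      rw [Fin.cons_zero, Fin.cons_succ, if_neg (Fin.succ_ne_zero j').symm, hmem j']
  | succ i' =>
    induction j using Fin.cases with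
    | zero =>
      rw [Fin.cons_zero, Fin.cons_succ, if_neg (Fin.succ_ne_zero i'),
        real_inner_comm, hmem i']
    | succ j' =>
      have := orthonormal_iff_ite.mp b.orthonormal i' j'
      rw [Fin.cons_succ, Fin.cons_succ, ← Submodule.coe_inner, this]
      simp [Fin.succ_inj]

lemma abs_det_block {m : ℕ} (L : Euc (m+1) ≃ₗ[ℝ] Euc (m+1)) {ξ a η : Euc (m+1)} (hξ : ‖ξ‖ = 1)
    (ha_def : a = LinearMap.adjoint (L.toLinearMap) ξ) (ha : a ≠ 0)
    (hη_def : η = ‖a‖⁻¹ • a)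
    (bW : OrthonormalBasis (Fin m) ℝ (ℝ ∙ ξ)ᗮ)
    (bW' : OrthonormalBasis (Fin m) ℝ (ℝ ∙ η)ᗮ)
    (g : EuclideanSpace ℝ (Fin m) →ₗ[ℝ] EuclideanSpace ℝ (Fin m))
    (hg : ∀ i j, g (EuclideanSpace.single j 1) i = ⟪(bW i : Euc (m+1)), L (bW' j : Euc (m+1))⟫) :
    |LinearMap.det g| * ‖a‖ = |LinearMap.det (L.toLinearMap)| := by
  have hna : ‖a‖ ≠ 0 := norm_ne_zero_iff.mpr ha
  have hηn : ‖η‖ = 1 := by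
    rw [hη_def, norm_smul, norm_inv, norm_norm, inv_mul_cancel₀ hna]
  have hOn : Orthonormal ℝ (Fin.cons ξ (fun i => (bW i : Euc (m+1)))) := orthonormal_cons hξ bW
  have hOn' : Orthonormal ℝ (Fin.cons η (fun i => (bW' i : Euc (m+1)))) := orthonormal_cons hηn bW'
  have hcard : Fintype.card (Fin (m+1)) = finrank ℝ (Euc (m+1)) := by simp
  set B : Basis (Fin (m+1)) ℝ (Euc (m+1)) :=
    basisOfLinearIndependentOfCardEqFinrank hOn.linearIndependent hcard with hBdef
  set B' : Basis (Fin (m+1)) ℝ (Euc (m+1)) :=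
    basisOfLinearIndependentOfCardEqFinrank hOn'.linearIndependent hcard with hB'def
  have hB : ⇑B = Fin.cons ξ (fun i => (bW i : Euc (m+1))) :=
    coe_basisOfLinearIndependentOfCardEqFinrank _ _
  have hB' : ⇑B' = Fin.cons η (fun i => (bW' i : Euc (m+1))) :=
    coe_basisOfLinearIndependentOfCardEqFinrank _ _
  have hOnB : Orthonormal ℝ (⇑B) := hB ▸ hOn
  have hOnB' : Orthonormal ℝ (⇑B') := hB' ▸ hOn'
  have hrepr : ∀ (x : Euc (m+1)) i, B.repr x i = ⟪B i, x⟫ := by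
    intro x i
    have h1 : B = (B.toOrthonormalBasis hOnB).toBasis := (Basis.toBasis_toOrthonormalBasis _ _).symm
    rw [h1, OrthonormalBasis.coe_toBasis_repr_apply, OrthonormalBasis.repr_apply_apply,
      OrthonormalBasis.coe_toBasis]
  set M : Matrix (Fin (m+1)) (Fin (m+1)) ℝ := LinearMap.toMatrix B' B L.toLinearMap with hMdef
  have hMij : ∀ i j, M i j = ⟪B i, L (B' j)⟫ := by
    intro i j
    rw [hMdef, LinearMap.toMatrix_apply, hrepr]
    rfl
  have hadj : ∀ x : Euc (m+1), ⟪ξ, L x⟫ = ⟪a, x⟫ := by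
    intro x
    rw [ha_def, LinearMap.adjoint_inner_left]
    rfl
  have hax : ∀ x : Euc (m+1), ⟪a, x⟫ = ‖a‖ * ⟪η, x⟫ := by
    intro x
    rw [hη_def, real_inner_smul_left]
    field_simp
  have hM00 : M 0 0 = ‖a‖ := by
    rw [hMij, hB, hB', Fin.cons_zero, Fin.cons_zero, hadj, hax,
      real_inner_self_eq_norm_sq, hηn]
    ring
  have hM0succ : ∀ j : Fin m, M 0 j.succ = 0 := by
    intro j
    rw [hMij, hB, hB', Fin.cons_zero, Fin.cons_succ, hadj, hax,
      Submodule.mem_orthogonal_singleton_iff_inner_right.mp (bW' j).2, mul_zero]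
  have hsub : M.submatrix Fin.succ Fin.succ =
      LinearMap.toMatrix (EuclideanSpace.basisFun (Fin m) ℝ).toBasis
        (EuclideanSpace.basisFun (Fin m) ℝ).toBasis g := by
    ext i j
    rw [Matrix.submatrix_apply, hMij, hB, hB', Fin.cons_succ, Fin.cons_succ,
      LinearMap.toMatrix_apply, OrthonormalBasis.coe_toBasis_repr_apply,
      OrthonormalBasis.coe_toBasis, EuclideanSpace.basisFun_apply,
      EuclideanSpace.basisFun_repr, hg]
  have hdetsub : (M.submatrix Fin.succ Fin.succ).det = LinearMap.det g := by
    rw [hsub, LinearMap.det_toMatrix]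
  have hdetM : M.det = ‖a‖ * LinearMap.det g := by
    rw [Matrix.det_succ_row_zero]
    rw [Fintype.sum_eq_single (0 : Fin (m+1))]
    · rw [hM00, Fin.succAbove_zero, hdetsub]
      simp
    · intro j hj
      obtain ⟨j', rfl⟩ := Fin.eq_succ_of_ne_zero hj
      rw [hM0succ]
      ring
  have hdetL : LinearMap.det L.toLinearMap = (LinearMap.toMatrix B B' LinearMap.id).det * M.det := by
    rw [← LinearMap.det_toMatrix B' L.toLinearMap]
    have h2 : L.toLinearMap = LinearMap.id.comp L.toLinearMap := rfl
    rw [hMdef]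
    conv_lhs => rw [h2]
    rw [LinearMap.toMatrix_comp B' B B', Matrix.det_mul]
  have hchange : |(LinearMap.toMatrix B B' LinearMap.id).det| = 1 := by
    rw [LinearMap.toMatrix_id_eq_basis_toMatrix, ← Basis.det_apply]
    have h1 : B' = ((B'.toOrthonormalBasis hOnB').toBasis) := (Basis.toBasis_toOrthonormalBasis _ _).symm
    have h2 : ⇑B = ⇑((B.toOrthonormalBasis hOnB)) := by
      rw [← OrthonormalBasis.coe_toBasis, Basis.toBasis_toOrthonormalBasis]
    rw [h1, h2, ← Real.norm_eq_abs]
    exact OrthonormalBasis.det_to_matrix_orthonormalBasis _ _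
  rw [hdetL, abs_mul, hchange, one_mul, hdetM, abs_mul, abs_norm]
  ring

lemma volume_closedBall_coe {m : ℕ} {W : Submodule ℝ (Euc (m+1))}
    (b : OrthonormalBasis (Fin m) ℝ W) (r : ℝ) :
    volume (closedBall (0 : W) r) = volume (closedBall (0 : EuclideanSpace ℝ (Fin m)) r) := by
  rw [← b.measurePreserving_repr.measure_preimage measurableSet_closedBall.nullMeasurableSet]
  congr 1
  have h := b.repr.toIsometryEquiv.preimage_closedBall (0 : EuclideanSpace ℝ (Fin m)) r
  have h0 : b.repr.toIsometryEquiv.symm 0 = 0 := by simp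
  rw [h0] at h
  exact h.symm

lemma volume_linear_image {m : ℕ} {W W' : Submodule ℝ (Euc (m+1))}
    (bW : OrthonormalBasis (Fin m) ℝ W) (bW' : OrthonormalBasis (Fin m) ℝ W')
    (ψ : W' →ₗ[ℝ] W) (r : ℝ) :
    volume (ψ '' closedBall 0 r) =
      ENNReal.ofReal |LinearMap.det
          ((bW.repr.toLinearMap.comp ψ).comp bW'.repr.symm.toLinearMap)| *
        volume (closedBall (0 : EuclideanSpace ℝ (Fin m)) r) := by
  set g : EuclideanSpace ℝ (Fin m) →ₗ[ℝ] EuclideanSpace ℝ (Fin m) :=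
    (bW.repr.toLinearMap.comp ψ).comp bW'.repr.symm.toLinearMap with hgdef
  have him : (⇑bW'.repr '' closedBall 0 r : Set (EuclideanSpace ℝ (Fin m))) = closedBall 0 r := by
    have h := bW'.repr.toIsometryEquiv.image_closedBall (0 : W') r
    have h0 : bW'.repr.toIsometryEquiv 0 = 0 := by simp
    rw [h0] at h
    exact h
  have hψ : (⇑ψ '' closedBall 0 r : Set W) =
      ⇑bW.repr.symm '' (⇑g '' (⇑bW'.repr '' closedBall 0 r)) := by
    rw [← Set.image_comp, ← Set.image_comp]
    apply Set.image_congr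
    intro z _
    simp [hgdef]
  rw [hψ, him]
  have hXmeas : MeasurableSet (⇑g '' closedBall 0 r) :=
    (((isCompact_closedBall _ _).image g.continuous_of_finiteDimensional).isClosed).measurableSet
  have hpre : ⇑bW.repr.symm '' (⇑g '' closedBall 0 r) = ⇑bW.repr ⁻¹' (⇑g '' closedBall 0 r) :=
    congrFun (Set.image_eq_preimage_of_inverse
      (fun x => by simp) (fun x => by simp)) _
  rw [hpre, bW.measurePreserving_repr.measure_preimage hXmeas.nullMeasurableSet,
    Measure.addHaar_image_linearMap]

lemma section_ball {m : ℕ} {η : Euc (m+1)} (hη : ‖η‖ = 1) {s : ℝ} (hs : s^2 ≤ 1) :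
    {z : (ℝ ∙ η)ᗮ | s • η + (z : Euc (m+1)) ∈ closedBall (0 : Euc (m+1)) 1} =
      closedBall (0 : (ℝ ∙ η)ᗮ) (Real.sqrt (1 - s^2)) := by
  ext z
  have hz : ⟪η, (z : Euc (m+1))⟫ = 0 :=
    Submodule.mem_orthogonal_singleton_iff_inner_right.mp z.2
  have hnorm : ‖s • η + (z : Euc (m+1))‖^2 = s^2 + ‖z‖^2 := by
    rw [norm_add_sq_real, norm_smul, inner_smul_left]
    simp [hz, hη, mul_pow]
  have h4 := Real.sq_sqrt (show (0:ℝ) ≤ 1 - s^2 by linarith)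
  simp only [Set.mem_setOf_eq, mem_closedBall, dist_zero_right, dist_eq_norm, sub_zero]
  constructor
  · intro h
    have h2 : ‖s • η + (z : Euc (m+1))‖^2 ≤ 1 := by
      nlinarith [norm_nonneg (s • η + (z : Euc (m+1)))]
    rw [hnorm] at h2
    nlinarith [Real.sqrt_nonneg (1 - s^2), norm_nonneg z]
  · intro h
    have h2 : ‖z‖^2 ≤ 1 - s^2 := by nlinarith [norm_nonneg z, Real.sqrt_nonneg (1 - s^2)]
    have h3 : ‖s • η + (z : Euc (m+1))‖^2 ≤ 1 := by rw [hnorm]; linarith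
    nlinarith [norm_nonneg (s • η + (z : Euc (m+1)))]

set_option maxHeartbeats 2000000 in
set_option synthInstance.maxHeartbeats 400000 in
lemma section_formula {m : ℕ} (L : Euc (m+1) ≃ₗ[ℝ] Euc (m+1)) (b : Euc (m+1))
    {ξ : Euc (m+1)} (hξ : ‖ξ‖ = 1) {t : ℝ}
    (hs : ((t - ⟪b, ξ⟫) / ‖LinearMap.adjoint (L.toLinearMap) ξ‖)^2 ≤ 1) :
    volume {y : (ℝ ∙ ξ)ᗮ | t • ξ + (y : Euc (m+1)) ∈ (fun x => L x + b) '' closedBall 0 1}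
      = ENNReal.ofReal (|LinearMap.det (L.toLinearMap)| / ‖LinearMap.adjoint (L.toLinearMap) ξ‖
          * Real.sqrt (1 - ((t - ⟪b, ξ⟫) / ‖LinearMap.adjoint (L.toLinearMap) ξ‖)^2) ^ m)
          * volume (closedBall (0 : EuclideanSpace ℝ (Fin m)) 1) := by
  haveI : Fact (finrank ℝ (Euc (m+1)) = m + 1) := ⟨by simp⟩
  set a : Euc (m+1) := LinearMap.adjoint (L.toLinearMap) ξ with ha_def
  have hξ0 : ξ ≠ 0 := by intro h; rw [h, norm_zero] at hξ; norm_num at hξ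
  have hadj : ∀ x : Euc (m+1), ⟪L x, ξ⟫ = ⟪x, a⟫ := by
    intro x
    rw [ha_def, LinearMap.adjoint_inner_right]
    rfl
  have ha : a ≠ 0 := by
    intro h0
    have h1 : ⟪L (L.symm ξ), ξ⟫ = ⟪L.symm ξ, a⟫ := hadj _
    rw [L.apply_symm_apply, h0, inner_zero_right, real_inner_self_eq_norm_sq, hξ] at h1
    norm_num at h1
  have hna : ‖a‖ ≠ 0 := norm_ne_zero_iff.mpr ha
  set η : Euc (m+1) := ‖a‖⁻¹ • a with hη_def
  have hηn : ‖η‖ = 1 := by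
    rw [hη_def, norm_smul, norm_inv, norm_norm, inv_mul_cancel₀ hna]
  have hη0 : η ≠ 0 := by intro h; rw [h, norm_zero] at hηn; norm_num at hηn
  set s : ℝ := (t - ⟪b, ξ⟫) / ‖a‖ with hs_def
  have hxη : ∀ x : Euc (m+1), ⟪x, a⟫ = ‖a‖ * ⟪x, η⟫ := by
    intro x
    rw [hη_def, real_inner_smul_right]
    field_simp
  have hW'inner : ∀ z : (ℝ ∙ η)ᗮ, ⟪(z : Euc (m+1)), a⟫ = 0 := by
    intro z
    rw [hxη, real_inner_comm,
      Submodule.mem_orthogonal_singleton_iff_inner_right.mp z.2, mul_zero]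
  have hηa : ⟪η, a⟫ = ‖a‖ := by
    rw [hxη, real_inner_self_eq_norm_sq, hηn]
    ring
  have hψmem : ∀ z : (ℝ ∙ η)ᗮ, (L.toLinearMap.comp (ℝ ∙ η)ᗮ.subtype) z ∈ (ℝ ∙ ξ)ᗮ := by
    intro z
    rw [Submodule.mem_orthogonal_singleton_iff_inner_right]
    have h1 : ⟪L (z : Euc (m+1)), ξ⟫ = 0 := by rw [hadj, hW'inner]
    rw [real_inner_comm]
    exact h1
  set ψ : ((ℝ ∙ η)ᗮ : Submodule ℝ (Euc (m+1))) →ₗ[ℝ] ((ℝ ∙ ξ)ᗮ : Submodule ℝ (Euc (m+1))) :=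
    (L.toLinearMap.comp (ℝ ∙ η)ᗮ.subtype).codRestrict (ℝ ∙ ξ)ᗮ hψmem with hψdef
  have hψcoe : ∀ z : (ℝ ∙ η)ᗮ, (ψ z : Euc (m+1)) = L (z : Euc (m+1)) := fun z => rfl
  have hsa : s * ‖a‖ = t - ⟪b, ξ⟫ := by rw [hs_def]; field_simp
  have e2 : ⟪ξ, t • ξ⟫ = t := by
    rw [real_inner_smul_right, real_inner_self_eq_norm_sq, hξ]; ring
  have hvmem : L (s • η) + b - t • ξ ∈ (ℝ ∙ ξ)ᗮ := by
    rw [Submodule.mem_orthogonal_singleton_iff_inner_right]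
    have e1 : ⟪ξ, L (s • η)⟫ = s * ‖a‖ := by
      rw [real_inner_comm, hadj, real_inner_smul_left, hηa]
    rw [inner_sub_right, inner_add_right, e1, e2]
    linarith [hsa, real_inner_comm ξ b]
  set v : ((ℝ ∙ ξ)ᗮ : Submodule ℝ (Euc (m+1))) := ⟨L (s • η) + b - t • ξ, hvmem⟩ with hvdef
  have hset : {y : (ℝ ∙ ξ)ᗮ | t • ξ + (y : Euc (m+1)) ∈ (fun x => L x + b) '' closedBall 0 1}
      = (fun w => v + w) '' (⇑ψ '' {z : (ℝ ∙ η)ᗮ | s • η + (z : Euc (m+1)) ∈ closedBall (0 : Euc (m+1)) 1}) := by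
    rw [← Set.image_comp]
    ext y
    simp only [Set.mem_setOf_eq, Set.mem_image, Function.comp_apply]
    constructor
    · rintro ⟨u, hu, huy⟩
      have hyW : ⟪(y : Euc (m+1)), ξ⟫ = 0 := by
        rw [real_inner_comm]
        exact Submodule.mem_orthogonal_singleton_iff_inner_right.mp y.2
      have hLu : L u = t • ξ + (y : Euc (m+1)) - b := eq_sub_of_add_eq huy
      have hua : ⟪u, a⟫ = t - ⟪b, ξ⟫ := by
        rw [← hadj, hLu, inner_sub_left, inner_add_left, real_inner_smul_left,
          real_inner_self_eq_norm_sq, hξ, hyW]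
        ring
      have huη : ⟪u, η⟫ = s := by
        rw [hη_def, real_inner_smul_right, hua, hs_def]
        field_simp
      have hz0 : u - s • η ∈ (ℝ ∙ η)ᗮ := by
        rw [Submodule.mem_orthogonal_singleton_iff_inner_right, inner_sub_right,
          real_inner_smul_right, real_inner_self_eq_norm_sq, hηn]
        have hcomm : ⟪η, u⟫ = s := by rw [real_inner_comm]; exact huη
        rw [hcomm]
        ring
      refine ⟨⟨u - s • η, hz0⟩, ?_, ?_⟩
      · show s • η + (u - s • η) ∈ closedBall (0 : Euc (m+1)) 1
        have : s • η + (u - s • η) = u := by abel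
        rw [this]
        exact hu
      · apply Subtype.ext
        show (v : Euc (m+1)) + (ψ ⟨u - s • η, hz0⟩ : Euc (m+1)) = (y : Euc (m+1))
        rw [hψcoe]
        show L (s • η) + b - t • ξ + L (u - s • η) = (y : Euc (m+1))
        rw [map_sub, hLu]
        abel
    · rintro ⟨z, hz, rfl⟩
      refine ⟨s • η + (z : Euc (m+1)), hz, ?_⟩
      show L (s • η + (z : Euc (m+1))) + b = t • ξ + ((v + ψ z : (ℝ ∙ ξ)ᗮ) : Euc (m+1))
      rw [map_add, Submodule.coe_add, hψcoe]
      show L (s • η) + L (z : Euc (m+1)) + b = t • ξ + (L (s • η) + b - t • ξ + L (z : Euc (m+1)))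
      abel
  rw [hset, section_ball hηn hs]
  have htrans : ∀ X : Set ((ℝ ∙ ξ)ᗮ : Submodule ℝ (Euc (m+1))),
      volume ((fun w => v + w) '' X) = volume X := by
    intro X
    rw [Set.image_add_left, measure_preimage_add]
  rw [htrans]
  have hfr : finrank ℝ ((ℝ ∙ ξ)ᗮ : Submodule ℝ (Euc (m+1))) = m :=
    Submodule.finrank_orthogonal_span_singleton hξ0
  have hfr' : finrank ℝ ((ℝ ∙ η)ᗮ : Submodule ℝ (Euc (m+1))) = m :=
    Submodule.finrank_orthogonal_span_singleton hη0
  set bW : OrthonormalBasis (Fin m) ℝ ((ℝ ∙ ξ)ᗮ : Submodule ℝ (Euc (m+1))) :=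
    (stdOrthonormalBasis ℝ _).reindex (finCongr hfr) with hbWdef
  set bW' : OrthonormalBasis (Fin m) ℝ ((ℝ ∙ η)ᗮ : Submodule ℝ (Euc (m+1))) :=
    (stdOrthonormalBasis ℝ _).reindex (finCongr hfr') with hbW'def
  rw [volume_linear_image bW bW' ψ _]
  set g : EuclideanSpace ℝ (Fin m) →ₗ[ℝ] EuclideanSpace ℝ (Fin m) :=
    (bW.repr.toLinearMap.comp ψ).comp bW'.repr.symm.toLinearMap with hgdef
  have hg : ∀ i j, g (EuclideanSpace.single j 1) i
      = ⟪(bW i : Euc (m+1)), L (bW' j : Euc (m+1))⟫ := by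
    intro i j
    have h1 : g (EuclideanSpace.single j 1) = bW.repr (ψ (bW' j)) := by
      simp [hgdef, OrthonormalBasis.repr_symm_single]
    rw [h1, OrthonormalBasis.repr_apply_apply]
    rfl
  have hdet := abs_det_block L hξ ha_def ha hη_def bW bW' g hg
  have hdetg : |LinearMap.det g| = |LinearMap.det L.toLinearMap| / ‖a‖ := by
    rw [← hdet]
    field_simp
  rw [Measure.addHaar_closedBall' volume _ (Real.sqrt_nonneg _)]
  rw [hdetg, ← mul_assoc, ← ENNReal.ofReal_mul (by positivity)]
  congr 2
  simp

lemma continuous_coeff_pow {X : Type*} [TopologicalSpace X] {u v w : X → ℝ}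
    (hu : Continuous u) (hv : Continuous v) (hw : Continuous w) (k : ℕ) (j : ℕ) :
    Continuous fun x => ((Polynomial.C (u x) + Polynomial.C (v x) * Polynomial.X
      + Polynomial.C (w x) * Polynomial.X ^ 2) ^ k).coeff j := by
  induction k generalizing j with
  | zero => simpa [Polynomial.coeff_one] using (continuous_const : Continuous fun _ : X => (if j = 0 then (1:ℝ) else 0))
  | succ k ih =>
    have hbase : ∀ i : ℕ, Continuous fun x => (Polynomial.C (u x) + Polynomial.C (v x) * Polynomial.X
        + Polynomial.C (w x) * Polynomial.X ^ 2).coeff i := by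
      intro i
      match i with
      | 0 => simpa [Polynomial.coeff_add, Polynomial.coeff_C, Polynomial.coeff_C_mul] using hu
      | 1 => simpa [Polynomial.coeff_add, Polynomial.coeff_C, Polynomial.coeff_C_mul] using hv
      | 2 => simpa [Polynomial.coeff_add, Polynomial.coeff_C, Polynomial.coeff_C_mul,
          Polynomial.coeff_X, Polynomial.coeff_X_pow] using hw
      | (i+3) => simpa [Polynomial.coeff_add, Polynomial.coeff_C, Polynomial.coeff_C_mul,
          Polynomial.coeff_X, Polynomial.coeff_X_pow] using (continuous_const : Continuous fun _ : X => (0:ℝ))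
    simp only [pow_succ, Polynomial.coeff_mul]
    exact continuous_finset_sum _ fun p _ => (ih p.1).mul (hbase p.2)

lemma adjoint_ne_zero {m : ℕ} (L : Euc (m+1) ≃ₗ[ℝ] Euc (m+1)) {ξ : Euc (m+1)}
    (hξ : ‖ξ‖ = 1) : LinearMap.adjoint (L.toLinearMap) ξ ≠ 0 := by
  intro h0
  have h1 : ⟪L.symm ξ, LinearMap.adjoint (L.toLinearMap) ξ⟫ = ⟪L (L.symm ξ), ξ⟫ :=
    LinearMap.adjoint_inner_right _ _ _
  rw [L.apply_symm_apply, h0, inner_zero_right, real_inner_self_eq_norm_sq, hξ] at h1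
  norm_num at h1

set_option maxHeartbeats 2000000 in
set_option synthInstance.maxHeartbeats 400000 in
/-- Let `n ≥ 3` be odd and let `E` be an ellipsoid in `ℝⁿ`. Then `E`
is polynomially integrable: there exist continuous functions `a_0, …, a_{n-1}` on
`S^{n-1}` such that `V_{n-1}(E ∩ {ξ^⊥ + tξ}) = ∑_{k=0}^{n-1} a_k(ξ) t^k` for every
`ξ ∈ S^{n-1}` and every `t` for which `E ∩ {ξ^⊥ + tξ}` is nonempty. -/
theorem ellipsoid_polyIntegrable_of_odd_dim
    (n : ℕ) (hn : 3 ≤ n) (hno : Odd n)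
    (E : Set (Euc n)) (hE : IsEllipsoid E) :
    ∃ a : ℕ → (sphere (0 : Euc n) 1 → ℝ),
      (∀ k ≤ n - 1, Continuous (a k)) ∧
      ∀ ξ : sphere (0 : Euc n) 1, ∀ t : ℝ,
        (E ∩ {x : Euc n | ⟪x, (ξ : Euc n)⟫ = t}).Nonempty →
        parallelSection E (ξ : Euc n) t = ∑ k ∈ Finset.range (n - 1 + 1), a k ξ * t ^ k := by
  have hE' : ∃ T : Euc n ≃ᵃ[ℝ] Euc n, E = T '' closedBall (0 : Euc n) 1 := hE
  obtain ⟨T, rfl⟩ := hE'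
  obtain ⟨m, rfl⟩ : ∃ m, n = m + 1 := ⟨n - 1, by omega⟩
  obtain ⟨k0, hk0⟩ := hno
  have hmk : m = 2 * k0 := by omega
  set L : Euc (m+1) ≃ₗ[ℝ] Euc (m+1) := T.linear with hLdef
  set b0 : Euc (m+1) := T 0 with hb0def
  have hT : ∀ x, T x = L x + b0 := by
    intro x
    have h := congrFun (T.toAffineMap.decomp) x
    simpa [T.linear_toAffineMap] using h
  have hE : T '' closedBall 0 1 = (fun x => L x + b0) '' closedBall 0 1 := by
    apply Set.image_congr
    intro x _
    exact hT x
  set adj : Euc (m+1) →ₗ[ℝ] Euc (m+1) := LinearMap.adjoint (L.toLinearMap) with hadjdef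
  have hξnorm : ∀ ξ : sphere (0 : Euc (m+1)) 1, ‖(ξ : Euc (m+1))‖ = 1 := fun ξ =>
    mem_sphere_zero_iff_norm.mp ξ.2
  have hadjne : ∀ ξ : sphere (0 : Euc (m+1)) 1, adj (ξ : Euc (m+1)) ≠ 0 := fun ξ =>
    adjoint_ne_zero L (hξnorm ξ)
  set β : sphere (0 : Euc (m+1)) 1 → ℝ := fun ξ => ‖adj (ξ : Euc (m+1))‖⁻¹ with hβdef
  set γ : sphere (0 : Euc (m+1)) 1 → ℝ := fun ξ => ⟪b0, (ξ : Euc (m+1))⟫ with hγdef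
  set D : sphere (0 : Euc (m+1)) 1 → ℝ := fun ξ =>
    |LinearMap.det L.toLinearMap|
      * (volume (closedBall (0 : EuclideanSpace ℝ (Fin m)) 1)).toReal * β ξ with hDdef
  set uu : sphere (0 : Euc (m+1)) 1 → ℝ := fun ξ => 1 - (β ξ)^2 * (γ ξ)^2 with huudef
  set vv : sphere (0 : Euc (m+1)) 1 → ℝ := fun ξ => 2 * (β ξ)^2 * γ ξ with hvvdef
  set ww : sphere (0 : Euc (m+1)) 1 → ℝ := fun ξ => -(β ξ)^2 with hwwdef
  have hβc : Continuous β := by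
    apply Continuous.inv₀
    · exact (adj.continuous_of_finiteDimensional.comp continuous_subtype_val).norm
    · intro ξ
      exact norm_ne_zero_iff.mpr (hadjne ξ)
  have hγc : Continuous γ := by
    exact Continuous.inner continuous_const continuous_subtype_val
  have hDc : Continuous D := continuous_const.mul hβc
  have huuc : Continuous uu := continuous_const.sub ((hβc.pow 2).mul (hγc.pow 2))
  have hvvc : Continuous vv := (continuous_const.mul (hβc.pow 2)).mul hγc
  have hwwc : Continuous ww := (hβc.pow 2).neg
  refine ⟨fun j ξ => D ξ * ((Polynomial.C (uu ξ) + Polynomial.C (vv ξ) * Polynomial.X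
      + Polynomial.C (ww ξ) * Polynomial.X ^ 2) ^ k0).coeff j, ?_, ?_⟩
  · intro j _
    exact hDc.mul (continuous_coeff_pow huuc hvvc hwwc k0 j)
  · intro ξ t hne
    have hξn : ‖(ξ : Euc (m+1))‖ = 1 := hξnorm ξ
    -- derive the bound |s| ≤ 1 from nonemptiness
    obtain ⟨x, hxE, hxt⟩ := hne
    obtain ⟨z, hz, rfl⟩ := hxE
    have hzn : ‖z‖ ≤ 1 := by simpa [mem_closedBall, dist_zero_right] using hz
    have hxt' : ⟪T z, (ξ : Euc (m+1))⟫ = t := hxt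
    have hLz : ⟪L z, (ξ : Euc (m+1))⟫ = t - γ ξ := by
      rw [hT z, inner_add_left] at hxt'
      simp only [hγdef]
      linarith [hxt']
    have hinner : ⟪L z, (ξ : Euc (m+1))⟫ = ⟪z, adj (ξ : Euc (m+1))⟫ :=
      (LinearMap.adjoint_inner_right _ _ _).symm
    have hbound : |t - γ ξ| ≤ ‖adj (ξ : Euc (m+1))‖ := by
      rw [← hLz, hinner]
      calc |⟪z, adj (ξ : Euc (m+1))⟫| ≤ ‖z‖ * ‖adj (ξ : Euc (m+1))‖ :=
            abs_real_inner_le_norm _ _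
        _ ≤ 1 * ‖adj (ξ : Euc (m+1))‖ := by
            apply mul_le_mul_of_nonneg_right hzn (norm_nonneg _)
        _ = ‖adj (ξ : Euc (m+1))‖ := one_mul _
    have hapos : (0:ℝ) < ‖adj (ξ : Euc (m+1))‖ := norm_pos_iff.mpr (hadjne ξ)
    have hs : ((t - ⟪b0, (ξ : Euc (m+1))⟫) / ‖adj (ξ : Euc (m+1))‖)^2 ≤ 1 := by
      rw [div_pow]
      rw [div_le_one (by positivity)]
      have := sq_abs (t - γ ξ)
      nlinarith [hbound, abs_nonneg (t - γ ξ)]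
    -- apply the formula
    have hform := section_formula L b0 hξn hs
    have hVne : volume (closedBall (0 : EuclideanSpace ℝ (Fin m)) 1) ≠ ⊤ :=
      (measure_closedBall_lt_top).ne
    rw [parallelSection, hE, hform, ENNReal.toReal_mul, ENNReal.toReal_ofReal (by positivity)]
    -- now pure real algebra
    set s : ℝ := (t - ⟪b0, (ξ : Euc (m+1))⟫) / ‖adj (ξ : Euc (m+1))‖ with hsdef
    have hs1 : 1 - s^2 ≥ 0 := by nlinarith [hs]
    have hsqrt : Real.sqrt (1 - s^2) ^ m = (1 - s^2)^k0 := by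
      rw [hmk, pow_mul, Real.sq_sqrt hs1]
    set V : ℝ := (volume (closedBall (0 : EuclideanSpace ℝ (Fin m)) 1)).toReal with hVdef
    set p : Polynomial ℝ := (Polynomial.C (uu ξ) + Polynomial.C (vv ξ) * Polynomial.X
      + Polynomial.C (ww ξ) * Polynomial.X ^ 2) ^ k0 with hpdef
    have hdeg : p.natDegree < m + 1 := by
      have h1 : (Polynomial.C (uu ξ) + Polynomial.C (vv ξ) * Polynomial.X
          + Polynomial.C (ww ξ) * Polynomial.X ^ 2).natDegree ≤ 2 := by
        compute_degree
      have h2 : p.natDegree ≤ k0 * 2 := le_trans (Polynomial.natDegree_pow_le)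
        (Nat.mul_le_mul_left k0 h1)
      omega
    have heval : Polynomial.eval t p = (1 - s^2)^k0 := by
      rw [hpdef]
      simp only [Polynomial.eval_pow, Polynomial.eval_add, Polynomial.eval_mul,
        Polynomial.eval_C, Polynomial.eval_X, Polynomial.eval_pow]
      congr 1
      rw [huudef, hvvdef, hwwdef, hsdef, hβdef, hγdef]
      simp only []
      field_simp
      ring
    have hevalsum := Polynomial.eval_eq_sum_range' hdeg t
    rw [heval] at hevalsum
    have hrange : m + 1 - 1 + 1 = m + 1 := by omega
    rw [hrange]
    calc |LinearMap.det L.toLinearMap| / ‖adj (ξ : Euc (m+1))‖ * Real.sqrt (1 - s^2) ^ m * V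
        = D ξ * (1 - s^2)^k0 := by
          rw [hsqrt, hDdef]
          simp only []
          rw [hβdef]
          simp only []
          field_simp
      _ = D ξ * ∑ i ∈ Finset.range (m+1), p.coeff i * t^i := by rw [← hevalsum]
      _ = ∑ i ∈ Finset.range (m+1), D ξ * p.coeff i * t^i := by
          rw [Finset.mul_sum]
          congr 1
          funext i
          ring
end
end

section
/- Let n ≥ 2, let m be an odd positive integer, and let K be a convex body in ℝⁿ containing the origin in its interior, with radial function ρ_K. Set r₀ = min_{θ ∈ S^{n-1}} ρ_K(θ). Then the function t ↦ ∫_{S^{n-1}} (ρ_K(θ)² − t²)^{m/2} dθ does not coincide with any polynomial on the interval (−r₀, r₀). -/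
open MeasureTheory Metric Set
open scoped RealInnerProductSpace

noncomputable section

/-- The radial function of `K` with respect to the point `x`:
`ρ_{K-x}(θ) = sup {a ≥ 0 : x + a • θ ∈ K}` (equal to `0` if this set is empty,
since `sSup ∅ = 0` in `ℝ`). For `x = 0` and `K` a convex body containing the origin
in its interior this is the usual radial function `ρ_K`. -/
def radial {n : ℕ} (K : Set (Euc n)) (x θ : Euc n) : ℝ :=
  sSup {a : ℝ | 0 ≤ a ∧ x + a • θ ∈ K}

/-- The spherical Lebesgue measure on the unit sphere of the hyperplane `ξ^⊥`
(viewed inside the `(n-1)`-dimensional inner product space `(ℝ ∙ ξ)ᗮ`). -/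
def perpSphereMeasure {n : ℕ} (ξ : Euc n) :
    Measure (sphere (0 : (ℝ ∙ ξ)ᗮ) 1) := volume.toSphere

/-- The spherical Lebesgue measure on the unit sphere `S^{n-1}` of `ℝⁿ`. -/
def sphMeasure (n : ℕ) : Measure (sphere (0 : Euc n) 1) :=
  (volume : Measure (Euc n)).toSphere

/-- The `m`-th dual section function
`A_{K,m,ξ}(t) = (1/(n-1)) ∫_{S^{n-1} ∩ ξ^⊥} ρ_{K - tξ}(θ)^m dθ`. -/
def dualSectionFn {n : ℕ} (K : Set (Euc n)) (m : ℕ) (ξ : Euc n) (t : ℝ) : ℝ :=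
  (1 / (n - 1 : ℝ)) *
    ∫ θ : sphere (0 : (ℝ ∙ ξ)ᗮ) 1,
      radial K (t • ξ) ((θ : (ℝ ∙ ξ)ᗮ) : Euc n) ^ m ∂(perpSphereMeasure ξ)

/-- `K` has a polynomial `m`-th dual section function of degree `N`:
there are continuous functions `a_0, …, a_N` on `S^{n-1}` with
`A_{K,m,ξ}(t) = ∑_{k=0}^N a_k(ξ) t^k` for all `ξ ∈ S^{n-1}` and all
`t ∈ [-ρ_K(-ξ), ρ_K(ξ)]`. -/
def HasPolyDualSectionDeg {n : ℕ} (K : Set (Euc n)) (m N : ℕ) : Prop :=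
  ∃ a : ℕ → (sphere (0 : Euc n) 1 → ℝ),
    (∀ k ≤ N, Continuous (a k)) ∧
    ∀ ξ : sphere (0 : Euc n) 1, ∀ t : ℝ,
      -radial K 0 (-(ξ : Euc n)) ≤ t → t ≤ radial K 0 (ξ : Euc n) →
      dualSectionFn K m (ξ : Euc n) t = ∑ k ∈ Finset.range (N + 1), a k ξ * t ^ k

/-- `K` has a polynomial `m`-th dual section function. -/
def HasPolyDualSection {n : ℕ} (K : Set (Euc n)) (m : ℕ) : Prop :=
  ∃ N : ℕ, HasPolyDualSectionDeg K m N

section AuxLemmas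

lemma aux_iteratedDeriv_poly (p : Polynomial ℝ) (j : ℕ) :
    iteratedDeriv j (fun x => p.eval x) = fun x => (Polynomial.derivative^[j] p).eval x := by
  induction j generalizing p with
  | zero => simp [iteratedDeriv_zero]
  | succ j ih =>
    rw [iteratedDeriv_succ', Function.iterate_succ_apply, ← ih (Polynomial.derivative p)]
    have hd : (deriv fun x => Polynomial.eval x p) = fun x => (Polynomial.derivative p).eval x :=
      funext fun x => Polynomial.deriv p
    rw [hd]

lemma aux_iteratedDeriv_rpow (α : ℝ) (j : ℕ) :
    ∀ x ∈ Set.Iio (1 : ℝ),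
      iteratedDeriv j (fun x : ℝ => (1 - x) ^ α) x
        = (∏ i ∈ Finset.range j, ((i : ℝ) - α)) * (1 - x) ^ (α - j) := by
  induction j with
  | zero => intro x hx; simp [iteratedDeriv_zero]
  | succ j ih =>
    intro x hx
    rw [iteratedDeriv_succ]
    have hev : iteratedDeriv j (fun x : ℝ => (1 - x) ^ α)
        =ᶠ[nhds x] fun y => (∏ i ∈ Finset.range j, ((i : ℝ) - α)) * (1 - y) ^ (α - j) := by
      filter_upwards [Iio_mem_nhds hx] with y hy using ih y hy
    rw [hev.deriv_eq]
    have h1x : (0 : ℝ) < 1 - x := by linarith [hx.out]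
    have hd : HasDerivAt (fun y : ℝ => (1 - y) ^ (α - j))
        ((-1) * (α - j) * (1 - x) ^ (α - j - 1)) x := by
      have hinner : HasDerivAt (fun y : ℝ => 1 - y) (-1) x :=
        (hasDerivAt_id x).const_sub 1
      exact hinner.rpow_const (Or.inl h1x.ne')
    rw [deriv_const_mul _ hd.differentiableAt, hd.deriv]
    rw [Finset.prod_range_succ]
    have hcast : α - ↑j - 1 = α - ↑(j + 1) := by push_cast; ring
    rw [hcast]
    ring

lemma aux_analyticAt (α : ℝ) : AnalyticAt ℝ (fun x : ℝ => (1 - x) ^ α) 0 := by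
  have hc : AnalyticAt ℂ (fun z : ℂ => (1 - z) ^ (α : ℂ)) 0 := by
    apply (analyticAt_const.sub analyticAt_id).cpow analyticAt_const
    simpa using Complex.one_mem_slitPlane
  have h2 : AnalyticAt ℝ
      (fun x : ℝ => Complex.reCLM ((1 - (x : ℂ)) ^ (α : ℂ))) 0 := by
    have h3 : AnalyticAt ℝ (fun z : ℂ => (1 - z) ^ (α : ℂ)) 0 := hc.restrictScalars
    have h4 : AnalyticAt ℝ (fun x : ℝ => (1 - (x : ℂ)) ^ (α : ℂ)) 0 := by
      have h3' : AnalyticAt ℝ (fun z : ℂ => (1 - z) ^ (α : ℂ)) (Complex.ofRealCLM (0 : ℝ)) := by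
        simpa using h3
      exact h3'.comp (Complex.ofRealCLM.analyticAt (0 : ℝ))
    exact (Complex.reCLM.analyticAt _).comp h4
  apply h2.congr
  filter_upwards [Iio_mem_nhds (zero_lt_one (α := ℝ))] with x hx
  have h1x : (0 : ℝ) ≤ 1 - x := by linarith [hx.out]
  have hoc := Complex.ofReal_cpow h1x α
  rw [show ((1 - x : ℝ) : ℂ) = 1 - (x : ℂ) by push_cast; ring] at hoc
  rw [← hoc]
  simp

end AuxLemmas

lemma aux_radial_eq {n : ℕ} (K : Set (Euc n)) (hK : IsCompact K) (hKc : Convex ℝ K)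
    (h0 : K ∈ nhds (0 : Euc n)) (θ : Euc n) (hg : 0 < gauge K θ) :
    radial K 0 θ = (gauge K θ)⁻¹ := by
  have hset : {a : ℝ | 0 ≤ a ∧ (0 : Euc n) + a • θ ∈ K} = Set.Icc 0 (gauge K θ)⁻¹ := by
    ext a
    simp only [Set.mem_setOf_eq, zero_add, Set.mem_Icc]
    constructor
    · rintro ⟨ha, haK⟩
      refine ⟨ha, ?_⟩
      have h1 : gauge K (a • θ) ≤ 1 := gauge_le_one_of_mem haK
      rw [gauge_smul_of_nonneg ha, smul_eq_mul] at h1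
      rw [← one_div]
      exact (le_div_iff₀ hg).mpr h1
    · rintro ⟨ha, hale⟩
      refine ⟨ha, ?_⟩
      have h1 : gauge K (a • θ) ≤ 1 := by
        rw [gauge_smul_of_nonneg ha, smul_eq_mul]
        calc a * gauge K θ ≤ (gauge K θ)⁻¹ * gauge K θ :=
              mul_le_mul_of_nonneg_right hale hg.le
          _ = 1 := inv_mul_cancel₀ hg.ne'
      have h2 := (gauge_le_one_iff_mem_closure hKc h0).mp h1
      rwa [hK.isClosed.closure_eq] at h2
  rw [radial, hset, csSup_Icc (by positivity)]

set_option maxHeartbeats 1000000 in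
open scoped ENNReal NNReal Topology in
/-- For `n ≥ 2`, `m` odd, and a convex body `K ⊂ ℝⁿ` with the origin in
its interior, with `r₀ = min_{θ ∈ S^{n-1}} ρ_K(θ)`, the function
`t ↦ ∫_{S^{n-1}} (ρ_K(θ)² − t²)^{m/2} dθ` does not coincide with any polynomial on the
interval `(−r₀, r₀)`. -/
theorem integral_rpow_not_polynomial
    (n m : ℕ) (hn : 2 ≤ n) (hm : Odd m) (hm1 : 1 ≤ m)
    (K : Set (Euc n)) (hK : IsCompact K) (hKc : Convex ℝ K) (h0 : 0 ∈ interior K)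
    (r₀ : ℝ) (hr₀ : r₀ = ⨅ θ : sphere (0 : Euc n) 1, radial K 0 (θ : Euc n)) :
    ¬ ∃ p : Polynomial ℝ, ∀ t ∈ Set.Ioo (-r₀) r₀,
        (∫ θ : sphere (0 : Euc n) 1,
            (radial K 0 (θ : Euc n) ^ 2 - t ^ 2) ^ ((m : ℝ) / 2) ∂(sphMeasure n))
          = p.eval t := by
  rintro ⟨p, hp⟩
  classical
  -- basic setup
  set μ := sphMeasure n with hμdef
  haveI hfinμ : IsFiniteMeasure μ :=
    inferInstanceAs (IsFiniteMeasure (volume : Measure (Euc n)).toSphere)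
  haveI hNE : Nonempty (Fin n) := ⟨⟨0, by omega⟩⟩
  haveI hsphne : Nonempty (sphere (0 : Euc n) 1) := by
    refine ⟨⟨EuclideanSpace.single (⟨0, by omega⟩ : Fin n) (1 : ℝ), ?_⟩⟩
    rw [mem_sphere_zero_iff_norm, EuclideanSpace.norm_single]
    norm_num
  have hKnhds : K ∈ nhds (0 : Euc n) := mem_interior_iff_mem_nhds.mp h0
  obtain ⟨ε, hε0, hεK⟩ : ∃ ε > 0, ball (0 : Euc n) ε ⊆ K := Metric.mem_nhds_iff.mp hKnhds
  obtain ⟨R, hR0, hKR⟩ : ∃ R, 0 < R ∧ K ⊆ closedBall (0 : Euc n) R :=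
    hK.isBounded.subset_closedBall_lt 0 0
  have habs : Absorbent ℝ K := absorbent_nhds_zero hKnhds
  set ρ : sphere (0 : Euc n) 1 → ℝ := fun θ => radial K 0 (θ : Euc n) with hρdef
  -- gauge bounds and radial formula
  have hθnorm : ∀ θ : sphere (0 : Euc n) 1, ‖(θ : Euc n)‖ = 1 := fun θ =>
    mem_sphere_zero_iff_norm.mp θ.2
  have hgub : ∀ θ : sphere (0 : Euc n) 1, gauge K (θ : Euc n) ≤ 1 / ε := by
    intro θ
    have h1 := gauge_mono (absorbent_ball_zero hε0) hεK (θ : Euc n)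
    rwa [gauge_ball hε0.le, hθnorm θ] at h1
  have hglb : ∀ θ : sphere (0 : Euc n) 1, 1 / R ≤ gauge K (θ : Euc n) := by
    intro θ
    have h1 := gauge_mono habs hKR (θ : Euc n)
    rwa [gauge_closedBall hR0.le, hθnorm θ] at h1
  have hgpos : ∀ θ : sphere (0 : Euc n) 1, 0 < gauge K (θ : Euc n) := fun θ =>
    lt_of_lt_of_le (by positivity) (hglb θ)
  have hrad : ∀ θ : sphere (0 : Euc n) 1, ρ θ = (gauge K (θ : Euc n))⁻¹ := fun θ =>
    aux_radial_eq K hK hKc hKnhds _ (hgpos θ)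
  have hρcont : Continuous ρ := by
    have h1 : Continuous fun θ : sphere (0 : Euc n) 1 => (gauge K (θ : Euc n))⁻¹ :=
      ((continuous_gauge hKc hKnhds).comp continuous_subtype_val).inv₀ fun θ => (hgpos θ).ne'
    rw [show ρ = fun θ : sphere (0 : Euc n) 1 => (gauge K (θ : Euc n))⁻¹ from funext hrad]
    exact h1
  have hρlb : ∀ θ, ε ≤ ρ θ := by
    intro θ
    rw [hrad θ]
    calc ε = (1 / ε)⁻¹ := by rw [one_div, inv_inv]
      _ ≤ (gauge K (θ : Euc n))⁻¹ := by
          apply inv_anti₀ (hgpos θ) (hgub θ)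
  have hρub : ∀ θ, ρ θ ≤ R := by
    intro θ
    rw [hrad θ]
    calc (gauge K (θ : Euc n))⁻¹ ≤ (1 / R)⁻¹ := by
          apply inv_anti₀ (by positivity) (hglb θ)
      _ = R := by rw [one_div, inv_inv]
  -- r₀ facts
  have hr₀ε : ε ≤ r₀ := by
    rw [hr₀]
    exact le_ciInf hρlb
  have hr₀0 : 0 < r₀ := lt_of_lt_of_le hε0 hr₀ε
  have hr₀le : ∀ θ, r₀ ≤ ρ θ := by
    intro θ
    rw [hr₀]
    exact ciInf_le ⟨ε, by rintro y ⟨θ', rfl⟩; exact hρlb θ'⟩ θ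
  -- power series of (1 - x) ^ (m / 2)
  set α : ℝ := (m : ℝ) / 2 with hαdef
  obtain ⟨q, rq, hq⟩ : ∃ q rq, HasFPowerSeriesOnBall (fun x : ℝ => (1 - x) ^ α) q 0 rq := by
    obtain ⟨q, hq⟩ := aux_analyticAt α
    obtain ⟨rq, hrq⟩ := hq
    exact ⟨q, rq, hrq⟩
  have hqcoeff : ∀ j, q.coeff j ≠ 0 := by
    intro j
    have h1 := hq.factorial_smul (1 : ℝ) j
    rw [← iteratedDeriv_eq_iteratedFDeriv] at h1
    rw [aux_iteratedDeriv_rpow α j 0 (by norm_num)] at h1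
    intro hc0
    have h2 : q j (fun _ => (1 : ℝ)) = q.coeff j := rfl
    rw [h2, hc0, smul_zero] at h1
    have h3 : (∏ i ∈ Finset.range j, ((i : ℝ) - α)) ≠ 0 := by
      apply Finset.prod_ne_zero_iff.mpr
      intro i _
      intro hiz
      have : (2 : ℝ) * i = m := by
        rw [hαdef] at hiz
        field_simp at hiz
        linarith
      have h2i : 2 * i = m := by exact_mod_cast this
      have hmo := Nat.odd_iff.mp hm
      omega
    have h4 : ((1 : ℝ) - 0) ^ (α - j) ≠ 0 := by
      rw [sub_zero, Real.one_rpow]; norm_num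
    exact (mul_ne_zero h3 h4) h1.symm
  -- choose u
  have hrq0 : 0 < rq := hq.r_pos
  have hvpos : (0 : ℝ≥0∞) < min rq 1 := lt_min hrq0 zero_lt_one
  have hvne : min rq 1 ≠ ⊤ := ne_top_of_le_ne_top ENNReal.one_ne_top (min_le_right _ _)
  have hhalf : min rq 1 / 2 < min rq 1 := ENNReal.half_lt_self hvpos.ne' hvne
  set u : ℝ≥0 := (min rq 1 / 2).toNNReal with hudef
  have hucoe : (u : ℝ≥0∞) = min rq 1 / 2 := by
    rw [hudef]
    exact ENNReal.coe_toNNReal (by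
      intro hc
      exact hvne (by
        have := hhalf
        rw [hc] at this
        exact absurd this (not_lt.mpr le_top)))
  have hu_lt_rq : (u : ℝ≥0∞) < rq := by
    rw [hucoe]; exact hhalf.trans_le (min_le_left _ _)
  have hu_lt_radius : (u : ℝ≥0∞) < q.radius := hu_lt_rq.trans_le hq.r_le
  have hu1 : (u : ℝ) < 1 := by
    have h1 : (u : ℝ≥0∞) < 1 := by
      rw [hucoe]; exact hhalf.trans_le (min_le_right _ _)
    exact_mod_cast h1
  have hu0 : 0 < (u : ℝ) := by
    have h1 : (0 : ℝ≥0∞) < u := by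
      rw [hucoe]; exact ENNReal.half_pos hvpos.ne' |>.trans_le le_rfl
    exact_mod_cast h1
  have hsumq : Summable fun j => ‖q j‖ * (u : ℝ) ^ j := q.summable_norm_mul_pow hu_lt_radius
  -- the radius b
  set b : ℝ := r₀ * u with hbdef
  have hb0 : 0 < b := mul_pos hr₀0 hu0
  have hbr₀ : b < r₀ := by
    calc b = r₀ * u := rfl
      _ < r₀ * 1 := by exact mul_lt_mul_of_pos_left hu1 hr₀0
      _ = r₀ := mul_one r₀
  -- the term functions
  set f : ℕ → ℝ → (sphere (0 : Euc n) 1) → ℝ :=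
    fun j t θ => q.coeff j * ((ρ θ) ^ m / (ρ θ) ^ (2 * j)) * t ^ (2 * j) with hfdef
  -- pointwise expansion
  have key : ∀ t : ℝ, |t| < b → ∀ θ : sphere (0 : Euc n) 1,
      HasSum (fun j => f j t θ) ((ρ θ ^ 2 - t ^ 2) ^ α) := by
    intro t ht θ
    have hρθ : r₀ ≤ ρ θ := hr₀le θ
    have hρ0' : 0 < ρ θ := lt_of_lt_of_le hr₀0 hρθ
    set x : ℝ := (t / ρ θ) ^ 2 with hxdef
    have hx0 : 0 ≤ x := sq_nonneg _
    have habsd : |t / ρ θ| < u := by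
      rw [abs_div, abs_of_pos hρ0', div_lt_iff₀ hρ0']
      calc |t| < b := ht
        _ = r₀ * u := rfl
        _ ≤ ρ θ * u := mul_le_mul_of_nonneg_right hρθ hu0.le
        _ = u * ρ θ := mul_comm _ _
    have hxu : x < (u : ℝ) := by
      have h1 : x = |t / ρ θ| ^ 2 := (sq_abs _).symm
      nlinarith [abs_nonneg (t / ρ θ)]
    have hmem : x ∈ Metric.eball (0 : ℝ) rq := by
      rw [EMetric.mem_ball, edist_zero_right]
      refine lt_trans ?_ hu_lt_rq
      show ((‖x‖₊ : ℝ≥0∞) < (u : ℝ≥0∞))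
      rw [show ((‖x‖₊ : ℝ≥0∞) < (u : ℝ≥0∞)) ↔ (‖x‖₊ < u) from ENNReal.coe_lt_coe]
      rw [← NNReal.coe_lt_coe]
      calc (‖x‖₊ : ℝ) = ‖x‖ := rfl
        _ = x := by rw [Real.norm_eq_abs, abs_of_nonneg hx0]
        _ < u := hxu
    have hs := hq.hasSum hmem
    simp only [FormalMultilinearSeries.apply_eq_pow_smul_coeff, smul_eq_mul, zero_add] at hs
    have hs2 := hs.mul_left ((ρ θ) ^ m)
    have hterm : (fun j => (ρ θ) ^ m * (x ^ j * q.coeff j)) = fun j => f j t θ := by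
      funext j
      simp only [hfdef]
      have hxj : x ^ j = t ^ (2 * j) / (ρ θ) ^ (2 * j) := by
        rw [hxdef, ← pow_mul, div_pow]
      rw [hxj]
      field_simp
    have h2 : (0 : ℝ) ≤ ρ θ ^ 2 - t ^ 2 := by
      have ha : |t| < r₀ := lt_trans ht hbr₀
      have hab := abs_lt.mp ha
      nlinarith
    have hval : (ρ θ) ^ m * (1 - x) ^ α = (ρ θ ^ 2 - t ^ 2) ^ α := by
      have h1 : (1 : ℝ) - x = (ρ θ ^ 2 - t ^ 2) / ρ θ ^ 2 := by
        rw [hxdef]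
        field_simp
      rw [h1, Real.div_rpow h2 (sq_nonneg _)]
      have h3 : ((ρ θ ^ 2 : ℝ)) ^ α = ρ θ ^ m := by
        rw [← Real.rpow_natCast (ρ θ) 2, ← Real.rpow_mul hρ0'.le,
          show ((2 : ℕ) : ℝ) * α = (m : ℝ) by rw [hαdef]; push_cast; ring,
          Real.rpow_natCast]
      rw [h3]
      field_simp
    rw [← hterm, ← hval]
    exact hs2
  -- integrability and bounds
  have hρθ0 : ∀ θ, 0 < ρ θ := fun θ => lt_of_lt_of_le hε0 (hρlb θ)
  have hcontdiv : ∀ j : ℕ, Continuous fun θ => (ρ θ) ^ m / (ρ θ) ^ (2 * j) := by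
    intro j
    exact (hρcont.pow m).div (hρcont.pow (2 * j)) fun θ => pow_ne_zero _ (hρθ0 θ).ne'
  have hcompsupp : ∀ g : sphere (0 : Euc n) 1 → ℝ, HasCompactSupport g := fun g =>
    IsCompact.of_isClosed_subset isCompact_univ (isClosed_tsupport _) (Set.subset_univ _)
  have hint : ∀ (j : ℕ) (t : ℝ), Integrable (fun θ => f j t θ) μ := by
    intro j t
    have hc : Continuous fun θ => f j t θ := by
      simp only [hfdef]
      exact (continuous_const.mul (hcontdiv j)).mul continuous_const
    exact hc.integrable_of_hasCompactSupport (hcompsupp _)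
  have hintdiv : ∀ j : ℕ, Integrable (fun θ => (ρ θ) ^ m / (ρ θ) ^ (2 * j)) μ := fun j =>
    (hcontdiv j).integrable_of_hasCompactSupport (hcompsupp _)
  set V : ℝ := (μ Set.univ).toReal with hVdef
  have hV0 : 0 < V := by
    have h1 : μ Set.univ
        = Module.finrank ℝ (Euc n) * volume (ball (0 : Euc n) 1) :=
      Measure.toSphere_apply_univ _
    rw [hVdef]
    apply ENNReal.toReal_pos
    · rw [h1]
      apply mul_ne_zero
      · simp [finrank_euclideanSpace_fin]
        omega
      · exact (measure_ball_pos volume 0 one_pos).ne'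
    · rw [h1]
      exact ENNReal.mul_ne_top (ENNReal.natCast_ne_top _) measure_ball_lt_top.ne
  set I : ℕ → ℝ := fun j => ∫ θ, (ρ θ) ^ m / (ρ θ) ^ (2 * j) ∂μ with hIdef
  have hIub : ∀ j, I j ≤ R ^ m / r₀ ^ (2 * j) * V := by
    intro j
    have hmono : ∀ θ, (ρ θ) ^ m / (ρ θ) ^ (2 * j) ≤ R ^ m / r₀ ^ (2 * j) := by
      intro θ
      apply div_le_div₀ (by positivity) (pow_le_pow_left₀ (hρθ0 θ).le (hρub θ) m)
        (by positivity) (pow_le_pow_left₀ hr₀0.le (hr₀le θ) _)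
    calc I j ≤ ∫ _θ, (R ^ m / r₀ ^ (2 * j)) ∂μ :=
          integral_mono (hintdiv j) (integrable_const _) hmono
      _ = R ^ m / r₀ ^ (2 * j) * V := by
          rw [integral_const, smul_eq_mul, mul_comm]; rfl
  have hIpos : ∀ j, 0 < I j := by
    intro j
    have hmono : ∀ θ, r₀ ^ m / R ^ (2 * j) ≤ (ρ θ) ^ m / (ρ θ) ^ (2 * j) := by
      intro θ
      apply div_le_div₀ (pow_nonneg (hρθ0 θ).le m) (pow_le_pow_left₀ hr₀0.le (hr₀le θ) m)
        (pow_pos (hρθ0 θ) _) (pow_le_pow_left₀ (hρθ0 θ).le (hρub θ) _)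
    calc (0 : ℝ) < r₀ ^ m / R ^ (2 * j) * V := by positivity
      _ = ∫ _θ, (r₀ ^ m / R ^ (2 * j)) ∂μ := by
          rw [integral_const, smul_eq_mul, mul_comm]; rfl
      _ ≤ I j := integral_mono (integrable_const _) (hintdiv j) hmono
  have hnormint : ∀ (j : ℕ) (t : ℝ), |t| < b →
      (∫ θ, ‖f j t θ‖ ∂μ) ≤ ‖q j‖ * (u : ℝ) ^ j * (R ^ m * V) := by
    intro j t ht
    have hcoeq : |q.coeff j| = ‖q j‖ := by
      rw [q.norm_apply_eq_norm_coef (n := j), Real.norm_eq_abs]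
    have hptwise : ∀ θ, ‖f j t θ‖ ≤ ‖q j‖ * (u : ℝ) ^ j * R ^ m := by
      intro θ
      have hρ0' : 0 < ρ θ := hρθ0 θ
      have h1 : ‖f j t θ‖ = |q.coeff j| * ((ρ θ) ^ m * (|t| / ρ θ) ^ (2 * j)) := by
        simp only [hfdef, Real.norm_eq_abs, abs_mul]
        rw [abs_of_nonneg (by positivity : (0:ℝ) ≤ (ρ θ) ^ m / (ρ θ) ^ (2 * j)),
          abs_pow, div_pow]
        field_simp
      rw [h1, hcoeq]
      have h3 : |t| / ρ θ ≤ (u : ℝ) := by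
        rw [div_le_iff₀ hρ0']
        calc |t| ≤ b := ht.le
          _ = r₀ * u := rfl
          _ ≤ ρ θ * u := mul_le_mul_of_nonneg_right (hr₀le θ) hu0.le
          _ = u * ρ θ := mul_comm _ _
      have h4 : (|t| / ρ θ) ^ (2 * j) ≤ (u : ℝ) ^ j := by
        calc (|t| / ρ θ) ^ (2 * j) ≤ (u : ℝ) ^ (2 * j) :=
              pow_le_pow_left₀ (by positivity) h3 _
          _ ≤ (u : ℝ) ^ j := pow_le_pow_of_le_one hu0.le hu1.le (by omega)
      have h5 : (ρ θ) ^ m ≤ R ^ m := pow_le_pow_left₀ hρ0'.le (hρub θ) m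
      calc ‖q j‖ * ((ρ θ) ^ m * (|t| / ρ θ) ^ (2 * j))
          ≤ ‖q j‖ * (R ^ m * (u : ℝ) ^ j) := by
            apply mul_le_mul_of_nonneg_left ?_ (norm_nonneg _)
            apply mul_le_mul h5 h4 (by positivity) (by positivity)
        _ = ‖q j‖ * (u : ℝ) ^ j * R ^ m := by ring
    calc (∫ θ, ‖f j t θ‖ ∂μ) ≤ ∫ _θ, (‖q j‖ * (u : ℝ) ^ j * R ^ m) ∂μ :=
          integral_mono (hint j t).norm (integrable_const _) hptwise
      _ = ‖q j‖ * (u : ℝ) ^ j * R ^ m * V := by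
          rw [integral_const, smul_eq_mul, mul_comm]; rfl
      _ = ‖q j‖ * (u : ℝ) ^ j * (R ^ m * V) := by ring
  -- the coefficients
  set c : ℕ → ℝ := fun j => q.coeff j * I j with hcdef
  have hc0 : ∀ j, c j ≠ 0 := fun j => mul_ne_zero (hqcoeff j) (hIpos j).ne'
  have hsum_c : ∀ t : ℝ, |t| < b → HasSum (fun j => c j * t ^ (2 * j)) (p.eval t) := by
    intro t ht
    have hsummInt : Summable fun j => ∫ θ, ‖f j t θ‖ ∂μ := by
      apply Summable.of_nonneg_of_le
        (fun j => integral_nonneg fun θ => norm_nonneg _)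
        (fun j => hnormint j t ht)
      exact hsumq.mul_right (R ^ m * V)
    have h1 := hasSum_integral_of_summable_integral_norm (μ := μ)
      (F := fun j θ => f j t θ) (fun j => hint j t) hsummInt
    have h2 : (∫ θ, (∑' j, f j t θ) ∂μ) = p.eval t := by
      have ht' : |t| < r₀ := lt_trans ht hbr₀
      have htio := abs_lt.mp ht'
      refine Eq.trans (integral_congr_ae (Filter.Eventually.of_forall fun θ => ?_))
        (hp t ⟨htio.1, htio.2⟩)
      exact (key t ht θ).tsum_eq
    have h3 : ∀ j, (∫ θ, f j t θ ∂μ) = c j * t ^ (2 * j) := by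
      intro j
      calc (∫ θ, f j t θ ∂μ)
          = ∫ θ, (q.coeff j * t ^ (2 * j)) * ((ρ θ) ^ m / (ρ θ) ^ (2 * j)) ∂μ := by
            apply integral_congr_ae
            apply Filter.Eventually.of_forall
            intro θ
            simp only [hfdef]
            ring
        _ = (q.coeff j * t ^ (2 * j)) * I j := integral_const_mul _ _
        _ = c j * t ^ (2 * j) := by rw [hcdef]; ring
    rw [← h2, ← funext h3]
    exact h1
  -- build the formal multilinear series
  set e : ℕ → ℝ := fun k => if k % 2 = 0 then c (k / 2) else 0 with hedef
  set P : FormalMultilinearSeries ℝ ℝ ℝ :=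
    fun k => ContinuousMultilinearMap.mkPiRing ℝ (Fin k) (e k) with hPdef
  have hPcoeff : ∀ k, P.coeff k = e k := by
    intro k
    simp [hPdef, FormalMultilinearSeries.coeff, ContinuousMultilinearMap.mkPiRing_apply]
  have hPapply : ∀ (k : ℕ) (y : ℝ), (P k fun _ => y) = e k * y ^ k := by
    intro k y
    rw [FormalMultilinearSeries.apply_eq_pow_smul_coeff, hPcoeff, smul_eq_mul]
    ring
  have hPnorm : ∀ k, ‖P k‖ = |e k| := by
    intro k
    rw [hPdef]
    rw [ContinuousMultilinearMap.norm_mkPiRing, Real.norm_eq_abs]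
  have he2j : ∀ j, e (2 * j) = c j := by
    intro j
    rw [hedef]
    simp [Nat.mul_mod_right, Nat.mul_div_cancel_left j (by norm_num : 0 < 2)]
  have hinj : Function.Injective (fun j : ℕ => 2 * j) := fun a b h => by
    have h' : 2 * a = 2 * b := h
    omega
  have hoddzero : ∀ k ∉ Set.range (fun j : ℕ => 2 * j), e k = 0 := by
    intro k hk
    rw [hedef]
    have : ¬ (k % 2 = 0) := by
      intro hev
      exact hk ⟨k / 2, show 2 * (k / 2) = k by omega⟩
    simp [this]
  set bnn : ℝ≥0 := ⟨b, hb0.le⟩ with hbnndef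
  have hPsummable : Summable fun k => ‖P k‖ * (bnn : ℝ) ^ k := by
    have hbcoe : ((bnn : ℝ≥0) : ℝ) = b := rfl
    apply (Function.Injective.summable_iff hinj ?_).mp
    · show Summable ((fun k => ‖P k‖ * ((bnn : ℝ≥0) : ℝ) ^ k) ∘ fun j : ℕ => 2 * j)
      apply Summable.of_nonneg_of_le
        (fun j => mul_nonneg (norm_nonneg _) (pow_nonneg (by rw [hbcoe]; exact hb0.le) _))
        (fun j => ?_) (hsumq.mul_right (R ^ m * V))
      have hcoeq : |q.coeff j| = ‖q j‖ := by
        rw [q.norm_apply_eq_norm_coef (n := j), Real.norm_eq_abs]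
      show ‖P (2 * j)‖ * b ^ (2 * j) ≤ ‖q j‖ * (u : ℝ) ^ j * (R ^ m * V)
      rw [hPnorm, he2j]
      have h2 : |c j| = ‖q j‖ * I j := by
        rw [hcdef]
        rw [abs_mul, hcoeq, abs_of_pos (hIpos j)]
      have h3 : b ^ (2 * j) = r₀ ^ (2 * j) * (u : ℝ) ^ (2 * j) := by
        rw [hbdef, mul_pow]
      rw [h2, h3]
      have h4 : ‖q j‖ * I j * (r₀ ^ (2 * j) * (u : ℝ) ^ (2 * j))
          ≤ ‖q j‖ * (R ^ m / r₀ ^ (2 * j) * V) * (r₀ ^ (2 * j) * (u : ℝ) ^ (2 * j)) := by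
        apply mul_le_mul_of_nonneg_right ?_ (by positivity)
        exact mul_le_mul_of_nonneg_left (hIub j) (norm_nonneg _)
      refine h4.trans ?_
      have h5 : ‖q j‖ * (R ^ m / r₀ ^ (2 * j) * V) * (r₀ ^ (2 * j) * (u : ℝ) ^ (2 * j))
          = ‖q j‖ * (R ^ m * V) * (u : ℝ) ^ (2 * j) := by
        field_simp
      rw [h5]
      have h6 : (u : ℝ) ^ (2 * j) ≤ (u : ℝ) ^ j :=
        pow_le_pow_of_le_one hu0.le hu1.le (by omega)
      calc ‖q j‖ * (R ^ m * V) * (u : ℝ) ^ (2 * j)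
          ≤ ‖q j‖ * (R ^ m * V) * (u : ℝ) ^ j := by
            apply mul_le_mul_of_nonneg_left h6 (by positivity)
        _ = ‖q j‖ * (u : ℝ) ^ j * (R ^ m * V) := by ring
    · intro k hk
      rw [hPnorm, hoddzero k hk]
      simp
  have hball : HasFPowerSeriesOnBall (fun t => p.eval t) P 0 bnn := by
    refine ⟨P.le_radius_of_summable hPsummable, by exact_mod_cast hb0, ?_⟩
    intro y hy
    have hyb : |y| < b := by
      rw [EMetric.mem_ball, edist_zero_right] at hy
      have h1 : (‖y‖₊ : ℝ≥0∞) < (bnn : ℝ≥0∞) := by simpa using hy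
      have h2 : ‖y‖₊ < bnn := by exact_mod_cast h1
      have h3 : ‖y‖ < b := h2
      rwa [Real.norm_eq_abs] at h3
    rw [zero_add]
    have hsum := hsum_c y hyb
    have hcomp : HasSum ((fun k => P k fun _ => y) ∘ (fun j : ℕ => 2 * j)) (p.eval y) := by
      have heq : ((fun k => P k fun _ => y) ∘ (fun j : ℕ => 2 * j))
          = fun j => c j * y ^ (2 * j) := by
        funext j
        simp only [Function.comp_apply]
        rw [hPapply, he2j]
      rw [heq]
      exact hsum
    apply (Function.Injective.hasSum_iff hinj ?_).mp hcomp
    intro k hk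
    rw [hPapply, hoddzero k hk, zero_mul]
  -- contradiction
  set j0 : ℕ := p.natDegree + 1 with hj0def
  have hdeg : p.natDegree < 2 * j0 := by omega
  have hPzero : e (2 * j0) = 0 := by
    have h1 := hball.factorial_smul (1 : ℝ) (2 * j0)
    rw [← iteratedDeriv_eq_iteratedFDeriv] at h1
    rw [aux_iteratedDeriv_poly p (2 * j0)] at h1
    rw [Polynomial.iterate_derivative_eq_zero hdeg] at h1
    rw [hPapply (2 * j0) 1] at h1
    simp only [Polynomial.eval_zero, one_pow, mul_one] at h1
    have h3 : ((Nat.factorial (2 * j0) : ℕ) : ℝ) ≠ 0 := by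
      exact_mod_cast Nat.factorial_ne_zero (2 * j0)
    rw [nsmul_eq_mul] at h1
    exact (mul_eq_zero.mp h1).resolve_left h3
  rw [he2j] at hPzero
  exact hc0 j0 hPzero
end
end

section
/- Let m be a positive integer and let a ∈ ℝ with |a| ≠ 1. Then lim_{ε→0⁺} (ε/2) ∫_{-1}^{1} (1 − z²)^{(m−2)/2} |z − a|^{−1+ε} dz = (1 − a²)^{(m−2)/2} if |a| < 1, and the limit equals 0 if |a| > 1. -/
open MeasureTheory Filter Set

namespace Stmt8

lemma rpow_le_max {x cl cu : ℝ} (q : ℝ) (h0 : 0 < cl) (h1 : cl ≤ x) (h2 : x ≤ cu) :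
    x ^ q ≤ max (cl ^ q) (cu ^ q) := by
  rcases le_or_gt 0 q with hq | hq
  · exact le_max_of_le_right (Real.rpow_le_rpow (h0.le.trans h1) h2 hq)
  · exact le_max_of_le_left (Real.rpow_le_rpow_of_nonpos h0 h1 hq.le)

lemma w_bound {x c p : ℝ} (hc : 0 < c) (hcx : c ≤ x) (hp1 : -1 ≤ p) (hp0 : p ≤ 0) :
    x ^ p ≤ max 1 c⁻¹ := by
  have h1 : x ^ p ≤ c ^ p := Real.rpow_le_rpow_of_nonpos hc hcx hp0
  rcases le_total c 1 with h | h
  · refine h1.trans (le_max_of_le_right ?_)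
    calc c ^ p ≤ c ^ (-1 : ℝ) := Real.rpow_le_rpow_of_exponent_ge hc h hp1
    _ = c⁻¹ := by rw [Real.rpow_neg_one]
  · exact h1.trans (le_max_of_le_left (Real.rpow_le_one_of_one_le_of_nonpos h hp0))

lemma abs_intervalIntegrable {p : ℝ} (hp : -1 < p) (T : ℝ) :
    IntervalIntegrable (fun x : ℝ => |x| ^ p) volume 0 T := by
  have key : ∀ T : ℝ, 0 ≤ T → IntervalIntegrable (fun x : ℝ => |x| ^ p) volume 0 T := by
    intro T hT
    rw [intervalIntegrable_iff, uIoc_of_le hT]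
    have h1 : IntegrableOn (fun x : ℝ => x ^ p) (Ioc (0:ℝ) T) := by
      have := intervalIntegral.intervalIntegrable_rpow' (a := 0) (b := T) hp
      rwa [intervalIntegrable_iff, uIoc_of_le hT] at this
    exact h1.congr_fun (fun x hx => by rw [abs_of_pos hx.1]) measurableSet_Ioc
  rcases le_total 0 T with hT | hT
  · exact key T hT
  · rw [IntervalIntegrable.iff_comp_neg]
    simpa [abs_neg] using key (-T) (by linarith)

lemma absSub_intervalIntegrable {p : ℝ} (hp : -1 < p) (a c d : ℝ) :
    IntervalIntegrable (fun z : ℝ => |z - a| ^ p) volume c d := by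
  have h : IntervalIntegrable (fun x : ℝ => |x| ^ p) volume (c - a) (d - a) :=
    (abs_intervalIntegrable hp (c - a)).symm.trans (abs_intervalIntegrable hp (d - a))
  simpa using h.comp_sub_right a

lemma absSub_integrableOn {p : ℝ} (hp : -1 < p) (a c d : ℝ) (hcd : c ≤ d) :
    IntegrableOn (fun z : ℝ => |z - a| ^ p) (Icc c d) :=
  (intervalIntegrable_iff_integrableOn_Icc_of_le hcd).mp (absSub_intervalIntegrable hp a c d)

lemma int_one_add {q : ℝ} (hq : -1 < q) {c d : ℝ} (hcd : c ≤ d) :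
    IntegrableOn (fun z : ℝ => (1 + z) ^ q) (Icc c d) := by
  have h : IntervalIntegrable (fun x : ℝ => x ^ q) volume (c + 1) (d + 1) :=
    intervalIntegral.intervalIntegrable_rpow' hq
  have h2 := h.comp_add_right 1
  simp only [add_sub_cancel_right] at h2
  have h3 : IntervalIntegrable (fun z : ℝ => (1 + z) ^ q) volume c d := by
    refine h2.congr ?_
    intro x _; show (x + 1) ^ q = (1 + x) ^ q
    rw [add_comm]
  exact (intervalIntegrable_iff_integrableOn_Icc_of_le hcd).mp h3

lemma int_one_sub {q : ℝ} (hq : -1 < q) {c d : ℝ} (hcd : c ≤ d) :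
    IntegrableOn (fun z : ℝ => (1 - z) ^ q) (Icc c d) := by
  have h : IntervalIntegrable (fun x : ℝ => x ^ q) volume (1 - c) (1 - d) :=
    intervalIntegral.intervalIntegrable_rpow' hq
  have h2 := h.comp_sub_left 1
  simp only [sub_sub_cancel] at h2
  exact (intervalIntegrable_iff_integrableOn_Icc_of_le hcd).mp h2

lemma bdd_on_mul {s : Set ℝ} (hs : MeasurableSet s) {g h : ℝ → ℝ} (hg : IntegrableOn g s)
    (hh : Measurable h) (C : ℝ) (hb : ∀ z ∈ s, ‖h z‖ ≤ C) :
    IntegrableOn (fun z => h z * g z) s := by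
  refine Integrable.bdd_mul (c := C) hg hh.aestronglyMeasurable ?_
  filter_upwards [ae_restrict_mem hs] with z hz using hb z hz

lemma f_integrableOn {q : ℝ} (hq : -1 < q) :
    IntegrableOn (fun z : ℝ => (1 - z ^ 2) ^ q) (Icc (-1 : ℝ) 1) := by
  have hsplit : Icc (-1:ℝ) 1 = Icc (-1:ℝ) 0 ∪ Icc (0:ℝ) 1 :=
    (Icc_union_Icc_eq_Icc (by norm_num) (by norm_num)).symm
  rw [hsplit]
  have hm1 : Measurable fun z : ℝ => (1 - z) ^ q := by fun_prop
  have hm2 : Measurable fun z : ℝ => (1 + z) ^ q := by fun_prop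
  refine IntegrableOn.union ?_ ?_
  · have h1 : IntegrableOn (fun z : ℝ => (1 - z) ^ q * (1 + z) ^ q) (Icc (-1:ℝ) 0) := by
      refine bdd_on_mul measurableSet_Icc (int_one_add hq (by norm_num)) hm1
        (max ((1:ℝ) ^ q) ((2:ℝ) ^ q)) fun z hz => ?_
      rw [Real.norm_eq_abs, abs_of_nonneg (Real.rpow_nonneg (by linarith [hz.2]) q)]
      exact rpow_le_max q one_pos (by linarith [hz.2]) (by linarith [hz.1])
    refine h1.congr_fun (fun z hz => ?_) measurableSet_Icc
    dsimp only; rw [← Real.mul_rpow (by linarith [hz.2]) (by linarith [hz.1])]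
    congr 1; ring
  · have h1 : IntegrableOn (fun z : ℝ => (1 + z) ^ q * (1 - z) ^ q) (Icc (0:ℝ) 1) := by
      refine bdd_on_mul measurableSet_Icc (int_one_sub hq (by norm_num)) hm2
        (max ((1:ℝ) ^ q) ((2:ℝ) ^ q)) fun z hz => ?_
      rw [Real.norm_eq_abs, abs_of_nonneg (Real.rpow_nonneg (by linarith [hz.1]) q)]
      exact rpow_le_max q one_pos (by linarith [hz.1]) (by linarith [hz.2])
    refine h1.congr_fun (fun z hz => ?_) measurableSet_Icc
    dsimp only; rw [← Real.mul_rpow (by linarith [hz.1]) (by linarith [hz.2])]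
    congr 1; ring

lemma main_integrable {q : ℝ} (hq : -1 < q) {a : ℝ} (ha : |a| ≠ 1) {p : ℝ}
    (hp : -1 < p) (hp0 : p ≤ 0) :
    IntegrableOn (fun z : ℝ => (1 - z ^ 2) ^ q * |z - a| ^ p) (Icc (-1 : ℝ) 1) := by
  have hmw : Measurable fun z : ℝ => |z - a| ^ p := by fun_prop
  have hmf : Measurable fun z : ℝ => (1 - z ^ 2) ^ q := by fun_prop
  have hm1 : Measurable fun z : ℝ => (1 - z) ^ q := by fun_prop
  have hm2 : Measurable fun z : ℝ => (1 + z) ^ q := by fun_prop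
  rcases lt_or_gt_of_ne ha with haa | haa
  · -- |a| < 1 : three pieces
    have ha1 : -1 < a := by cases abs_lt.mp haa; linarith
    have ha2 : a < 1 := by cases abs_lt.mp haa; linarith
    set b1 : ℝ := (a - 1) / 2 with hb1def
    set b2 : ℝ := (a + 1) / 2 with hb2def
    have hb1 : -1 < b1 := by rw [hb1def]; linarith
    have hb1a : b1 < a := by rw [hb1def]; linarith
    have hb2a : a < b2 := by rw [hb2def]; linarith
    have hb2 : b2 < 1 := by rw [hb2def]; linarith
    have hsub : Icc (-1:ℝ) 1 ⊆ Icc (-1:ℝ) b1 ∪ (Icc b1 b2 ∪ Icc b2 1) := by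
      rw [Icc_union_Icc_eq_Icc (le_of_lt (hb1a.trans hb2a)) hb2.le,
        Icc_union_Icc_eq_Icc hb1.le (by linarith : b1 ≤ 1)]
    refine IntegrableOn.mono_set (IntegrableOn.union ?_ (IntegrableOn.union ?_ ?_)) hsub
    · -- piece Icc (-1) b1 : singular factor (1+z)^q
      have h1 : IntegrableOn
          (fun z : ℝ => ((1 - z) ^ q * |z - a| ^ p) * (1 + z) ^ q) (Icc (-1:ℝ) b1) := by
        refine bdd_on_mul measurableSet_Icc (int_one_add hq hb1.le) (by fun_prop)
          ((max ((1 - b1) ^ q) ((2:ℝ) ^ q)) * (max 1 (a - b1)⁻¹)) fun z hz => ?_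
        rw [Real.norm_eq_abs, abs_mul,
          abs_of_nonneg (Real.rpow_nonneg (by linarith [hz.2]) q),
          abs_of_nonneg (Real.rpow_nonneg (abs_nonneg _) p)]
        have hw : |z - a| ^ p ≤ max 1 (a - b1)⁻¹ := by
          refine w_bound (by linarith) ?_ hp.le hp0
          rw [abs_sub_comm, abs_of_nonneg (by linarith [hz.2] : (0:ℝ) ≤ a - z)]
          linarith [hz.2]
        refine mul_le_mul ?_ hw (Real.rpow_nonneg (abs_nonneg _) p) (le_max_of_le_left ?_)
        · exact rpow_le_max q (by linarith) (by linarith [hz.2]) (by linarith [hz.1])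
        · exact Real.rpow_nonneg (by linarith) q
      refine h1.congr_fun (fun z hz => ?_) measurableSet_Icc
      dsimp only; rw [mul_right_comm, ← Real.mul_rpow (by linarith [hz.2] : (0:ℝ) ≤ 1 - z)
        (by linarith [hz.1] : (0:ℝ) ≤ 1 + z), show (1 - z) * (1 + z) = 1 - z ^ 2 by ring]
    · -- piece Icc b1 b2 : singular factor |z - a| ^ p
      have hM : max |b1| |b2| < 1 := max_lt (abs_lt.mpr ⟨hb1, hb1a.trans (hb2a.trans hb2)⟩)
        (abs_lt.mpr ⟨hb1.trans (hb1a.trans hb2a), hb2⟩)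
      have hM0 : 0 ≤ max |b1| |b2| := le_trans (abs_nonneg b1) (le_max_left _ _)
      have hM2 : (max |b1| |b2|) ^ 2 < 1 := by nlinarith
      have hMz : ∀ z ∈ Icc b1 b2, z ^ 2 ≤ (max |b1| |b2|) ^ 2 := by
        intro z hz
        have h1 : |z| ≤ max |b1| |b2| := abs_le_max_abs_abs hz.1 hz.2
        nlinarith [abs_nonneg z, sq_abs z]
      refine bdd_on_mul measurableSet_Icc (absSub_integrableOn hp a _ _ (hb1a.trans hb2a).le)
        hmf (max ((1 - (max |b1| |b2|) ^ 2) ^ q) ((1:ℝ) ^ q)) fun z hz => ?_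
      rw [Real.norm_eq_abs, abs_of_nonneg (Real.rpow_nonneg (by linarith [hMz z hz]) q)]
      exact rpow_le_max q (by linarith) (by linarith [hMz z hz]) (by nlinarith [sq_nonneg z])
    · -- piece Icc b2 1 : singular factor (1-z)^q
      have h1 : IntegrableOn
          (fun z : ℝ => ((1 + z) ^ q * |z - a| ^ p) * (1 - z) ^ q) (Icc b2 1) := by
        refine bdd_on_mul measurableSet_Icc (int_one_sub hq hb2.le) (by fun_prop)
          ((max ((1 + b2) ^ q) ((2:ℝ) ^ q)) * (max 1 (b2 - a)⁻¹)) fun z hz => ?_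
        rw [Real.norm_eq_abs, abs_mul,
          abs_of_nonneg (Real.rpow_nonneg (by linarith [hz.1]) q),
          abs_of_nonneg (Real.rpow_nonneg (abs_nonneg _) p)]
        have hw : |z - a| ^ p ≤ max 1 (b2 - a)⁻¹ := by
          refine w_bound (by linarith) ?_ hp.le hp0
          rw [abs_of_nonneg (by linarith [hz.1] : (0:ℝ) ≤ z - a)]
          linarith [hz.1]
        refine mul_le_mul ?_ hw (Real.rpow_nonneg (abs_nonneg _) p) (le_max_of_le_left ?_)
        · exact rpow_le_max q (by linarith) (by linarith [hz.1]) (by linarith [hz.2])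
        · exact Real.rpow_nonneg (by linarith) q
      refine h1.congr_fun (fun z hz => ?_) measurableSet_Icc
      dsimp only; rw [mul_right_comm, ← Real.mul_rpow (by linarith [hz.1] : (0:ℝ) ≤ 1 + z)
        (by linarith [hz.2] : (0:ℝ) ≤ 1 - z), show (1 + z) * (1 - z) = 1 - z ^ 2 by ring]
  · -- |a| > 1 : w bounded
    have h1 : IntegrableOn
        (fun z : ℝ => |z - a| ^ p * (1 - z ^ 2) ^ q) (Icc (-1:ℝ) 1) := by
      refine bdd_on_mul measurableSet_Icc (f_integrableOn hq) hmw
        (max 1 (|a| - 1)⁻¹) fun z hz => ?_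
      rw [Real.norm_eq_abs, abs_of_nonneg (Real.rpow_nonneg (abs_nonneg _) p)]
      refine w_bound (by linarith) ?_ hp.le hp0
      have h2 : |z| ≤ 1 := abs_le.mpr ⟨hz.1, hz.2⟩
      calc |a| - 1 ≤ |a| - |z| := by linarith
      _ ≤ |a - z| := abs_sub_abs_le_abs_sub a z
      _ = |z - a| := abs_sub_comm a z
    exact h1.congr_fun (fun z hz => mul_comm _ _) measurableSet_Icc

lemma near_integral {δ ε : ℝ} (hδ : 0 < δ) (hε : 0 < ε) (a : ℝ) :
    ∫ z in Icc (a - δ) (a + δ), |z - a| ^ (-1 + ε) = 2 * δ ^ ε / ε := by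
  have hle : a - δ ≤ a + δ := by linarith
  have hp : (-1 : ℝ) < -1 + ε := by linarith
  rw [integral_Icc_eq_integral_Ioc,
    ← intervalIntegral.integral_of_le hle,
    show ∫ z in (a - δ)..(a + δ), |z - a| ^ (-1 + ε)
      = ∫ z in (a - δ)..(a + δ), (fun x => |x| ^ (-1 + ε)) (z - a) from rfl,
    intervalIntegral.integral_comp_sub_right (fun x => |x| ^ (-1 + ε)) a,
    show a - δ - a = -δ by ring, show a + δ - a = δ by ring,
    ← intervalIntegral.integral_add_adjacent_intervals
      ((abs_intervalIntegrable hp (-δ)).symm) (abs_intervalIntegrable hp δ)]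
  have h1 : ∫ x in (0:ℝ)..δ, |x| ^ (-1 + ε) = δ ^ ε / ε := by
    rw [intervalIntegral.integral_congr (g := fun x => x ^ (-1 + ε)) ?_,
      integral_rpow (Or.inl hp)]
    · rw [Real.zero_rpow (by linarith : -1 + ε + 1 ≠ 0)]
      norm_num
    · intro x hx
      rw [uIcc_of_le hδ.le] at hx
      simp only; rw [abs_of_nonneg hx.1]
  have h2 : ∫ x in (-δ)..(0:ℝ), |x| ^ (-1 + ε) = δ ^ ε / ε := by
    have := intervalIntegral.integral_comp_neg (a := -δ) (b := 0) (fun x => |x| ^ (-1 + ε))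
    simp only [abs_neg, neg_zero, neg_neg] at this
    rw [this, h1]
  rw [h1, h2]; ring

lemma rpow_tendsto {δ : ℝ} (hδ : 0 < δ) :
    Tendsto (fun ε : ℝ => δ ^ ε) (nhds 0) (nhds 1) := by
  have h2 : (fun ε : ℝ => δ ^ ε) = fun ε => Real.exp (Real.log δ * ε) :=
    funext fun ε => Real.rpow_def_of_pos hδ ε
  rw [h2]
  have : Continuous fun ε : ℝ => Real.exp (Real.log δ * ε) := by continuity
  simpa using this.tendsto 0

lemma part2 {q : ℝ} (hq : -1 < q) {a : ℝ} (haa : 1 < |a|) :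
    Tendsto (fun ε : ℝ => ε / 2 * ∫ z in Icc (-1:ℝ) 1, (1 - z ^ 2) ^ q * |z - a| ^ (-1 + ε))
      (nhdsWithin 0 (Ioi 0)) (nhds 0) := by
  have ha : |a| ≠ 1 := ne_of_gt haa
  set C : ℝ := (max 1 (|a| - 1)⁻¹) * ∫ z in Icc (-1:ℝ) 1, (1 - z ^ 2) ^ q with hC
  have hIbound : ∀ ε : ℝ, ε ∈ Ioo (0:ℝ) 1 →
      (∫ z in Icc (-1:ℝ) 1, (1 - z ^ 2) ^ q * |z - a| ^ (-1 + ε)) ≤ C := by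
    intro ε hε
    have hp : (-1:ℝ) < -1 + ε := by linarith [hε.1]
    have hp0 : -1 + ε ≤ 0 := by linarith [hε.2]
    have hint := main_integrable hq ha hp hp0
    have hint2 : IntegrableOn (fun z : ℝ => max 1 (|a| - 1)⁻¹ * (1 - z ^ 2) ^ q)
        (Icc (-1:ℝ) 1) := (f_integrableOn hq).const_mul _
    have hptw : ∀ z ∈ Icc (-1:ℝ) 1,
        (1 - z ^ 2) ^ q * |z - a| ^ (-1 + ε) ≤ max 1 (|a| - 1)⁻¹ * (1 - z ^ 2) ^ q := by
      intro z hz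
      have hfz : 0 ≤ (1 - z ^ 2) ^ q := Real.rpow_nonneg (by nlinarith [hz.1, hz.2]) q
      have hw : |z - a| ^ (-1 + ε) ≤ max 1 (|a| - 1)⁻¹ := by
        refine w_bound (by linarith) ?_ hp.le hp0
        have h2 : |z| ≤ 1 := abs_le.mpr ⟨hz.1, hz.2⟩
        calc |a| - 1 ≤ |a| - |z| := by linarith
        _ ≤ |a - z| := abs_sub_abs_le_abs_sub a z
        _ = |z - a| := abs_sub_comm a z
      calc (1 - z ^ 2) ^ q * |z - a| ^ (-1 + ε) ≤ (1 - z ^ 2) ^ q * max 1 (|a| - 1)⁻¹ :=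
            mul_le_mul_of_nonneg_left hw hfz
        _ = max 1 (|a| - 1)⁻¹ * (1 - z ^ 2) ^ q := mul_comm _ _
    calc (∫ z in Icc (-1:ℝ) 1, (1 - z ^ 2) ^ q * |z - a| ^ (-1 + ε))
        ≤ ∫ z in Icc (-1:ℝ) 1, max 1 (|a| - 1)⁻¹ * (1 - z ^ 2) ^ q :=
          setIntegral_mono_on hint hint2 measurableSet_Icc hptw
      _ = C := by rw [hC, MeasureTheory.integral_const_mul]
  have hIe : ∀ᶠ ε in nhdsWithin (0:ℝ) (Ioi 0), ε ∈ Ioo (0:ℝ) 1 :=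
    Filter.eventually_of_mem (Ioo_mem_nhdsGT zero_lt_one) fun x hx => hx
  refine squeeze_zero' (g := fun ε : ℝ => ε / 2 * C) ?_ ?_ ?_
  · filter_upwards [hIe] with ε hε
    exact mul_nonneg (by linarith [hε.1]) (setIntegral_nonneg measurableSet_Icc fun z hz =>
      mul_nonneg (Real.rpow_nonneg (by nlinarith [hz.1, hz.2]) q)
        (Real.rpow_nonneg (abs_nonneg _) _))
  · filter_upwards [hIe] with ε hε
    exact mul_le_mul_of_nonneg_left (hIbound ε hε) (by linarith [hε.1])
  · have h1 : Tendsto (fun ε : ℝ => ε / 2 * C) (nhds 0) (nhds (0 / 2 * C)) :=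
      (Continuous.tendsto (by fun_prop) 0)
    simpa using h1.mono_left nhdsWithin_le_nhds

set_option maxHeartbeats 2000000 in
lemma part1 {q : ℝ} (hq : -1 < q) {a : ℝ} (haa : |a| < 1) :
    Tendsto (fun ε : ℝ => ε / 2 * ∫ z in Icc (-1:ℝ) 1, (1 - z ^ 2) ^ q * |z - a| ^ (-1 + ε))
      (nhdsWithin 0 (Ioi 0)) (nhds ((1 - a ^ 2) ^ q)) := by
  have ha : |a| ≠ 1 := ne_of_lt haa
  have ha2 : a ^ 2 < 1 := by nlinarith [sq_abs a, abs_nonneg a]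
  set L : ℝ := (1 - a ^ 2) ^ q with hL
  rw [Metric.tendsto_nhds]
  intro η hη
  set η1 : ℝ := η / 3 with hη1
  have hη1pos : 0 < η1 := by positivity
  have hcont : ContinuousAt (fun z : ℝ => (1 - z ^ 2) ^ q) a :=
    ContinuousAt.comp (Real.continuousAt_rpow_const _ q (Or.inl (by nlinarith))) (by fun_prop)
  obtain ⟨δ0, hδ0, hδ0'⟩ := Metric.continuousAt_iff.mp hcont η1 hη1pos
  set δ : ℝ := min (δ0 / 2) ((1 - |a|) / 2) with hδdef
  have hδ : 0 < δ := lt_min (by linarith) (by linarith)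
  have hδa : ∀ z ∈ Icc (a - δ) (a + δ), |(1 - z ^ 2) ^ q - L| ≤ η1 := by
    intro z hz
    have h1 : |z - a| ≤ δ := abs_le.mpr ⟨by linarith [hz.1], by linarith [hz.2]⟩
    have h2 : dist z a < δ0 := by
      rw [Real.dist_eq]
      calc |z - a| ≤ δ := h1
        _ ≤ δ0 / 2 := min_le_left _ _
        _ < δ0 := by linarith
    have h3 := hδ0' h2
    rw [Real.dist_eq] at h3
    exact h3.le
  have hsub : Icc (a - δ) (a + δ) ⊆ Icc (-1:ℝ) 1 := by
    intro z hz
    have h1 : δ ≤ (1 - |a|) / 2 := min_le_right _ _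
    have h2 := hz.1
    have h3 := hz.2
    rw [mem_Icc]
    exact ⟨by linarith [neg_abs_le a], by linarith [le_abs_self a]⟩
  set Cd : ℝ := max 1 δ⁻¹ with hCd
  set If : ℝ := ∫ z in Icc (-1:ℝ) 1, (1 - z ^ 2) ^ q with hIf
  have hIf0 : 0 ≤ If := setIntegral_nonneg measurableSet_Icc fun z hz =>
    Real.rpow_nonneg (by nlinarith [hz.1, hz.2]) q
  have hCd0 : 0 ≤ Cd := le_max_of_le_left zero_le_one
  set K : ℝ := Cd * If / 2 with hK
  have hbound : ∀ ε : ℝ, ε ∈ Ioo (0:ℝ) 1 →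
      (L - η1) * δ ^ ε ≤ ε / 2 * (∫ z in Icc (-1:ℝ) 1, (1 - z ^ 2) ^ q * |z - a| ^ (-1 + ε)) ∧
      ε / 2 * (∫ z in Icc (-1:ℝ) 1, (1 - z ^ 2) ^ q * |z - a| ^ (-1 + ε))
        ≤ (L + η1) * δ ^ ε + ε * K := by
    intro ε hε
    have hεpos := hε.1
    have hεne : ε ≠ 0 := ne_of_gt hεpos
    have hp : (-1:ℝ) < -1 + ε := by linarith
    have hp0 : -1 + ε ≤ 0 := by linarith [hε.2]
    have hw_nonneg : ∀ z : ℝ, 0 ≤ |z - a| ^ (-1 + ε) := fun z =>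
      Real.rpow_nonneg (abs_nonneg _) _
    have hN : MeasurableSet (Icc (a - δ) (a + δ)) := measurableSet_Icc
    have hFar : MeasurableSet (Icc (-1:ℝ) 1 \ Icc (a - δ) (a + δ)) :=
      measurableSet_Icc.diff hN
    have hint := main_integrable hq ha hp hp0
    have hintN := hint.mono_set hsub
    have hintF : IntegrableOn (fun z : ℝ => (1 - z ^ 2) ^ q * |z - a| ^ (-1 + ε))
        (Icc (-1:ℝ) 1 \ Icc (a - δ) (a + δ)) := hint.mono_set diff_subset
    have hintw : IntegrableOn (fun z : ℝ => |z - a| ^ (-1 + ε)) (Icc (a - δ) (a + δ)) :=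
      absSub_integrableOn hp a _ _ (by linarith)
    have hsplit : (∫ z in Icc (-1:ℝ) 1, (1 - z ^ 2) ^ q * |z - a| ^ (-1 + ε))
        = (∫ z in Icc (a - δ) (a + δ), (1 - z ^ 2) ^ q * |z - a| ^ (-1 + ε))
          + ∫ z in Icc (-1:ℝ) 1 \ Icc (a - δ) (a + δ),
              (1 - z ^ 2) ^ q * |z - a| ^ (-1 + ε) := by
      rw [← setIntegral_union disjoint_sdiff_self_right hFar hintN hintF,
        union_diff_cancel hsub]
    have hnear_val := near_integral hδ hεpos a
    have hnear_ub : (∫ z in Icc (a - δ) (a + δ), (1 - z ^ 2) ^ q * |z - a| ^ (-1 + ε))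
        ≤ (L + η1) * (2 * δ ^ ε / ε) := by
      have h1 : (∫ z in Icc (a - δ) (a + δ), (1 - z ^ 2) ^ q * |z - a| ^ (-1 + ε))
          ≤ ∫ z in Icc (a - δ) (a + δ), (L + η1) * |z - a| ^ (-1 + ε) :=
        setIntegral_mono_on hintN (hintw.const_mul _) hN fun z hz => by
          have h2 := (abs_le.mp (hδa z hz)).1
          have h3 := (abs_le.mp (hδa z hz)).2
          exact mul_le_mul_of_nonneg_right (by linarith) (hw_nonneg z)
      rwa [MeasureTheory.integral_const_mul, hnear_val] at h1
    have hnear_lb : (L - η1) * (2 * δ ^ ε / ε)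
        ≤ ∫ z in Icc (a - δ) (a + δ), (1 - z ^ 2) ^ q * |z - a| ^ (-1 + ε) := by
      have h1 : (∫ z in Icc (a - δ) (a + δ), (L - η1) * |z - a| ^ (-1 + ε))
          ≤ ∫ z in Icc (a - δ) (a + δ), (1 - z ^ 2) ^ q * |z - a| ^ (-1 + ε) :=
        setIntegral_mono_on (hintw.const_mul _) hintN hN fun z hz => by
          have h2 := (abs_le.mp (hδa z hz)).1
          exact mul_le_mul_of_nonneg_right (by linarith) (hw_nonneg z)
      rwa [MeasureTheory.integral_const_mul, hnear_val] at h1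
    have hfar0 : 0 ≤ ∫ z in Icc (-1:ℝ) 1 \ Icc (a - δ) (a + δ),
        (1 - z ^ 2) ^ q * |z - a| ^ (-1 + ε) :=
      setIntegral_nonneg hFar fun z hz =>
        mul_nonneg (Real.rpow_nonneg (by nlinarith [hz.1.1, hz.1.2]) q) (hw_nonneg z)
    have hfar_ub : (∫ z in Icc (-1:ℝ) 1 \ Icc (a - δ) (a + δ),
        (1 - z ^ 2) ^ q * |z - a| ^ (-1 + ε)) ≤ Cd * If := by
      have hfC : IntegrableOn (fun z : ℝ => (1 - z ^ 2) ^ q * Cd) (Icc (-1:ℝ) 1) :=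
        (f_integrableOn hq).mul_const Cd
      have h1 : (∫ z in Icc (-1:ℝ) 1 \ Icc (a - δ) (a + δ),
          (1 - z ^ 2) ^ q * |z - a| ^ (-1 + ε))
          ≤ ∫ z in Icc (-1:ℝ) 1 \ Icc (a - δ) (a + δ), (1 - z ^ 2) ^ q * Cd := by
        refine setIntegral_mono_on hintF (hfC.mono_set diff_subset) hFar fun z hz => ?_
        have hzI := hz.1
        have hdist : δ ≤ |z - a| := by
          by_contra hcon
          push_neg at hcon
          rcases abs_lt.mp hcon with ⟨hc1, hc2⟩
          exact hz.2 ⟨by linarith, by linarith⟩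
        have hf0 : 0 ≤ (1 - z ^ 2) ^ q :=
          Real.rpow_nonneg (by nlinarith [hzI.1, hzI.2]) q
        exact mul_le_mul_of_nonneg_left (w_bound hδ hdist hp.le hp0) hf0
      have h2 : (∫ z in Icc (-1:ℝ) 1 \ Icc (a - δ) (a + δ), (1 - z ^ 2) ^ q * Cd)
          ≤ ∫ z in Icc (-1:ℝ) 1, (1 - z ^ 2) ^ q * Cd := by
        refine setIntegral_mono_set hfC ?_
          (HasSubset.Subset.eventuallyLE diff_subset)
        filter_upwards [ae_restrict_mem measurableSet_Icc] with z hz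
        exact mul_nonneg (Real.rpow_nonneg (by nlinarith [hz.1, hz.2]) q) hCd0
      calc _ ≤ _ := h1
        _ ≤ _ := h2
        _ = Cd * If := by rw [MeasureTheory.integral_mul_const, hIf, mul_comm]
    have h5 : ε / 2 * ((L + η1) * (2 * δ ^ ε / ε)) = (L + η1) * δ ^ ε := by
      field_simp
    have h6 : ε / 2 * ((L - η1) * (2 * δ ^ ε / ε)) = (L - η1) * δ ^ ε := by
      field_simp
    rw [hsplit, mul_add]
    constructor
    · have hA := mul_le_mul_of_nonneg_left hnear_lb (by linarith : (0:ℝ) ≤ ε / 2)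
      have hB := mul_le_mul_of_nonneg_left hfar0 (by linarith : (0:ℝ) ≤ ε / 2)
      rw [h6] at hA
      linarith [hB]
    · have hA := mul_le_mul_of_nonneg_left hnear_ub (by linarith : (0:ℝ) ≤ ε / 2)
      have hB := mul_le_mul_of_nonneg_left hfar_ub (by linarith : (0:ℝ) ≤ ε / 2)
      rw [h5] at hA
      have hKε : ε / 2 * (Cd * If) = ε * K := by rw [hK]; ring
      rw [hKε] at hB
      linarith
  have hδε : Tendsto (fun ε : ℝ => δ ^ ε) (nhdsWithin 0 (Ioi 0)) (nhds 1) :=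
    (rpow_tendsto hδ).mono_left nhdsWithin_le_nhds
  have hU : Tendsto (fun ε : ℝ => (L + η1) * δ ^ ε + ε * K)
      (nhdsWithin 0 (Ioi 0)) (nhds (L + η1)) := by
    have h1 : Tendsto (fun ε : ℝ => ε * K) (nhdsWithin (0:ℝ) (Ioi 0)) (nhds 0) := by
      have h2 : Tendsto (fun ε : ℝ => ε * K) (nhds 0) (nhds (0 * K)) :=
        (Continuous.tendsto (by fun_prop) 0)
      simpa using h2.mono_left nhdsWithin_le_nhds
    have h3 := (hδε.const_mul (L + η1)).add h1
    simpa using h3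
  have hB : Tendsto (fun ε : ℝ => (L - η1) * δ ^ ε)
      (nhdsWithin 0 (Ioi 0)) (nhds (L - η1)) := by
    simpa using hδε.const_mul (L - η1)
  have hUe : ∀ᶠ ε in nhdsWithin (0:ℝ) (Ioi 0), (L + η1) * δ ^ ε + ε * K < L + η :=
    hU.eventually_lt_const (by rw [hη1]; linarith)
  have hBe : ∀ᶠ ε in nhdsWithin (0:ℝ) (Ioi 0), L - η < (L - η1) * δ ^ ε :=
    hB.eventually_const_lt (by rw [hη1]; linarith)
  have hIe : ∀ᶠ ε in nhdsWithin (0:ℝ) (Ioi 0), ε ∈ Ioo (0:ℝ) 1 :=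
    Filter.eventually_of_mem (Ioo_mem_nhdsGT zero_lt_one) fun x hx => hx
  filter_upwards [hUe, hBe, hIe] with ε h1 h2 h3
  obtain ⟨hlow, hup⟩ := hbound ε h3
  have hgoal : dist (ε / 2 * ∫ z in Icc (-1:ℝ) 1, (1 - z ^ 2) ^ q * |z - a| ^ (-1 + ε)) L
      < η := by
    rw [Real.dist_eq, abs_lt]
    constructor <;> linarith
  exact hgoal

end Stmt8

/-- Let `m ≥ 1` and `a ∈ ℝ` with `|a| ≠ 1`. Then
`lim_{ε→0⁺} (ε/2) ∫_{-1}^{1} (1 − z²)^{(m−2)/2} |z − a|^{−1+ε} dz` equals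
`(1 − a²)^{(m−2)/2}` if `|a| < 1`, and equals `0` if `|a| > 1`. -/
theorem limit_eps_integral_abs_rpow
    (m : ℕ) (hm : 1 ≤ m) (a : ℝ) (ha : |a| ≠ 1) :
    (|a| < 1 →
      Tendsto
        (fun ε : ℝ => ε / 2 *
          ∫ z in Set.Icc (-1 : ℝ) 1,
            (1 - z ^ 2) ^ (((m : ℝ) - 2) / 2) * |z - a| ^ (-1 + ε))
        (nhdsWithin 0 (Set.Ioi 0))
        (nhds ((1 - a ^ 2) ^ (((m : ℝ) - 2) / 2)))) ∧
    (1 < |a| →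
      Tendsto
        (fun ε : ℝ => ε / 2 *
          ∫ z in Set.Icc (-1 : ℝ) 1,
            (1 - z ^ 2) ^ (((m : ℝ) - 2) / 2) * |z - a| ^ (-1 + ε))
        (nhdsWithin 0 (Set.Ioi 0))
        (nhds 0)) := by
  have hm1 : (1:ℝ) ≤ (m:ℝ) := by exact_mod_cast hm
  have hq : (-1:ℝ) < ((m:ℝ) - 2) / 2 := by linarith
  exact ⟨fun h => Stmt8.part1 hq h, fun h => Stmt8.part2 hq h⟩
end
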